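/- arXiv:1805.09269 — 2 statements merged into one kernel-verified Lean document; each statement's English description precedes it below -/
import Mathlib

section
/- Assume Hypothesis I with Hölder exponent κ > 1/2 for ψ, and let η : I → ℝ^d be continuous with finite p-variation for every p > 2. Then for every feasible process (x,u) with respect to ξ, the function t ↦ ψ(t, x(t)) has finite (1/κ)-variation (note 1/κ < 2), and the Young integral ∫_I ψ(t, x(t)) dη(t) exists and is finite. -/
open Set MeasureTheory Filter
open scoped ENNReal NNReal Topology

noncomputable section
attribute [local instance] Classical.propDecidable

/-- The `p`-variation of a path over `[a, b]` (as an extended nonnegative real):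
`Var_p(x) = (sup_D ∑ |x(t_{i+1}) - x(t_i)|^p)^(1/p)` over finite dissections
`a = t_0 ≤ t_1 ≤ … ≤ t_n = b`. -/
noncomputable def pVar {V : Type*} [NormedAddCommGroup V] (p a b : ℝ) (x : ℝ → V) : ℝ≥0∞ :=
  (⨆ (n : ℕ) (t : Fin (n + 1) → ℝ)
      (_ : Monotone t ∧ t 0 = a ∧ t (Fin.last n) = b),
    ∑ i : Fin n, (‖x (t i.succ) - x (t i.castSucc)‖₊ : ℝ≥0∞) ^ p) ^ (1 / p)

/-- `HasYoungIntegral a b x y I`: the Riemann sums `∑ x(τᵢ)(y(t_{i+1}) - y(tᵢ))` over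
dissections `a = t₀ ≤ … ≤ t_n = b` with tags `τᵢ ∈ [tᵢ, t_{i+1}]` converge to `I`
as the mesh tends to `0`, independently of the dissections and the tags. -/
def HasYoungIntegral {V W : Type*} [NormedAddCommGroup V] [NormedSpace ℝ V]
    [NormedAddCommGroup W] [NormedSpace ℝ W]
    (a b : ℝ) (x : ℝ → (V →L[ℝ] W)) (y : ℝ → V) (I : W) : Prop :=
  ∀ ε > (0 : ℝ), ∃ δ > (0 : ℝ), ∀ (n : ℕ) (t : Fin (n + 1) → ℝ) (τ : Fin n → ℝ),
    Monotone t → t 0 = a → t (Fin.last n) = b →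
    (∀ i : Fin n, τ i ∈ Set.Icc (t i.castSucc) (t i.succ)) →
    (∀ i : Fin n, t i.succ - t i.castSucc < δ) →
    ‖(∑ i : Fin n, x (τ i) (y (t i.succ) - y (t i.castSucc))) - I‖ < ε

/-- The Young integral, when it exists (junk value `0` otherwise). -/
noncomputable def youngIntegral {V W : Type*} [NormedAddCommGroup V] [NormedSpace ℝ V]
    [NormedAddCommGroup W] [NormedSpace ℝ W]
    (a b : ℝ) (x : ℝ → (V →L[ℝ] W)) (y : ℝ → V) : W :=
  if h : ∃ I, HasYoungIntegral a b x y I then h.choose else 0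

/-- The `L^r` norm of a function on `[0, T]`. -/
noncomputable def LrNorm {E : Type*} [NormedAddCommGroup E] (r T : ℝ) (u : ℝ → E) : ℝ :=
  (∫ s in Set.Icc (0 : ℝ) T, ‖u s‖ ^ r) ^ (1 / r)

/-- The control class `𝒰_r`: measurable, `U`-valued a.e., with `‖u‖_r < ∞`. -/
def MemUr {E : Type*} [NormedAddCommGroup E] (r T : ℝ) (U : Set E) (u : ℝ → E) : Prop :=
  AEStronglyMeasurable u (volume.restrict (Set.Icc (0 : ℝ) T)) ∧
  (∀ᵐ t ∂(volume.restrict (Set.Icc (0 : ℝ) T)), u t ∈ U) ∧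
  IntegrableOn (fun s => ‖u s‖ ^ r) (Set.Icc (0 : ℝ) T)

/-- `(x, u)` is a process w.r.t. `ξ` on `[0, T]`: `u` measurable, `x` absolutely
continuous with `x(0) = ξ` and `ẋ = f(t,x) + g(t,x)u` a.e. (integral form). -/
def IsProcessOn {E : Type*} [NormedAddCommGroup E] [NormedSpace ℝ E]
    (T : ℝ) (f : ℝ → E → E) (g : ℝ → E → (E →L[ℝ] E)) (ξ : E) (x u : ℝ → E) : Prop :=
  AEStronglyMeasurable u (volume.restrict (Set.Icc (0 : ℝ) T)) ∧
  IntegrableOn (fun s => f s (x s) + (g s (x s)) (u s)) (Set.Icc (0 : ℝ) T) ∧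
  ∀ t ∈ Set.Icc (0 : ℝ) T, x t = ξ + ∫ s in (0 : ℝ)..t, (f s (x s) + (g s (x s)) (u s))

/-- Feasible process: a process whose control takes values in `U` a.e. -/
def IsFeasible {E : Type*} [NormedAddCommGroup E] [NormedSpace ℝ E]
    (T : ℝ) (f : ℝ → E → E) (g : ℝ → E → (E →L[ℝ] E)) (U : Set E)
    (ξ : E) (x u : ℝ → E) : Prop :=
  IsProcessOn T f g ξ x u ∧ ∀ᵐ t ∂(volume.restrict (Set.Icc (0 : ℝ) T)), u t ∈ U

/-- Admissible process: feasible with finite (integrable) deterministic costs. -/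
def IsAdmissible {E : Type*} [NormedAddCommGroup E] [NormedSpace ℝ E]
    (T : ℝ) (f : ℝ → E → E) (g : ℝ → E → (E →L[ℝ] E)) (U : Set E)
    (φ : ℝ → E → E → ℝ) (ξ : E) (x u : ℝ → E) : Prop :=
  IsFeasible T f g U ξ x u ∧
  IntegrableOn (fun t => φ t (x t) (u t)) (Set.Icc (0 : ℝ) T)

/-- The cost functional `A(x,u) = ∫ φ(t,x,u) dt + ∫ ψ(t,x) dη` (Young integral). -/
noncomputable def costA (d : ℕ) {E : Type*} [NormedAddCommGroup E] [NormedSpace ℝ E]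
    (T : ℝ) (φ : ℝ → E → E → ℝ)
    (ψ : ℝ → E → (EuclideanSpace ℝ (Fin d) →L[ℝ] ℝ)) (η : ℝ → EuclideanSpace ℝ (Fin d))
    (x u : ℝ → E) : ℝ :=
  (∫ t in Set.Icc (0 : ℝ) T, φ t (x t) (u t)) + youngIntegral 0 T (fun t => ψ t (x t)) η

/-- Hypothesis I(v): the nonlinearity and energy estimates for local solutions
with initial condition `ξ`. -/
structure HypothesisV {E : Type*} [NormedAddCommGroup E] [NormedSpace ℝ E]
    (T : ℝ) (f : ℝ → E → E) (g : ℝ → E → (E →L[ℝ] E)) (U : Set E)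
    (r Cs Ce β γ : ℝ) (ξ : E) : Prop where
  state_bound : ∀ u : ℝ → E, MemUr r T U u → ∀ T₁ ∈ Set.Ioc (0 : ℝ) T, ∀ x : ℝ → E,
    IsProcessOn T₁ f g ξ x u →
    (∫ s in Set.Icc (0 : ℝ) T₁, ‖f s (x s) + (g s (x s)) (u s)‖ ^ r) ^ (1 / r)
      ≤ Cs * (1 + LrNorm r T u ^ β)
  energy_bound : ∀ u : ℝ → E, MemUr r T U u → ∀ T₁ ∈ Set.Ioc (0 : ℝ) T, ∀ x : ℝ → E,
    IsProcessOn T₁ f g ξ x u → ∀ t ∈ Set.Icc (0 : ℝ) T₁,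
      ‖x t‖ ≤ Ce * (1 + LrNorm r T u ^ γ)

/-- Hypothesis I of the paper. -/
structure HypothesisI (d : ℕ) {E : Type*} [NormedAddCommGroup E] [NormedSpace ℝ E]
    (T : ℝ) (f : ℝ → E → E) (g : ℝ → E → (E →L[ℝ] E)) (U : Set E)
    (φ : ℝ → E → E → ℝ) (ψ : ℝ → E → (EuclideanSpace ℝ (Fin d) →L[ℝ] ℝ))
    (ξ : E) (r κ Cψ α Cφ δ Cs Ce β γ : ℝ) (K : ℝ → ℝ) : Prop where
  hT : 0 < T
  hr : 1 < r
  hκ : 1 / 2 < κ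
  hCψ : 0 ≤ Cψ
  hα : 0 ≤ α
  hCφ : 0 < Cφ
  hδ : 0 < δ
  hCs : 0 ≤ Cs
  hCe : 0 ≤ Ce
  hβ : 0 ≤ β
  hγ : 0 ≤ γ
  f_cont : ContinuousOn (fun p : ℝ × E => f p.1 p.2) (Set.Icc 0 T ×ˢ Set.univ)
  g_cont : ContinuousOn (fun p : ℝ × E => g p.1 p.2) (Set.Icc 0 T ×ˢ Set.univ)
  ψ_holder : ∀ R ≥ (0 : ℝ), ∀ s ∈ Set.Icc (0 : ℝ) T, ∀ t ∈ Set.Icc (0 : ℝ) T,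
    ∀ y z : E, ‖y‖ ≤ R → ‖z‖ ≤ R → ‖ψ t z - ψ s y‖ ≤ K R * (|t - s| + ‖z - y‖) ^ κ
  K_growth : ∀ R ≥ (0 : ℝ), K R ≤ Cψ * (1 + R ^ α)
  U_closed : IsClosed U
  U_convex : Convex ℝ U
  φ_cont : ContinuousOn (fun p : ℝ × E × E => φ p.1 p.2.1 p.2.2)
    (Set.Icc 0 T ×ˢ Set.univ ×ˢ U)
  φ_convex : ∀ t ∈ Set.Icc (0 : ℝ) T, ∀ z : E, ConvexOn ℝ U (fun v => φ t z v)
  φ_lower : ∀ t ∈ Set.Icc (0 : ℝ) T, ∀ z : E, ∀ v ∈ U,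
    Cφ * (‖v‖ ^ r - ‖z‖ ^ δ) ≤ φ t z v
  bounds : HypothesisV T f g U r Cs Ce β γ ξ
  exponent1 : γ * (α + κ - 1 / 2) + β / 2 < r
  exponent2 : γ * δ < r

/-- Hypothesis II of the paper (Hypothesis I plus differentiability assumptions),
with explicit partial derivatives `Df, Dg, Dφ, Dψ` with respect to the state. -/
structure HypothesisII (d : ℕ) {E : Type*} [NormedAddCommGroup E] [NormedSpace ℝ E]
    (T : ℝ) (f : ℝ → E → E) (g : ℝ → E → (E →L[ℝ] E)) (U : Set E)
    (φ : ℝ → E → E → ℝ) (ψ : ℝ → E → (EuclideanSpace ℝ (Fin d) →L[ℝ] ℝ))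
    (ξ : E) (r κ Cψ α Cφ δ Cs Ce β γ : ℝ) (K : ℝ → ℝ)
    (Df : ℝ → E → (E →L[ℝ] E)) (Dg : ℝ → E → (E →L[ℝ] (E →L[ℝ] E)))
    (Dφ : ℝ → E → E → (E →L[ℝ] ℝ))
    (Dψ : ℝ → E → (E →L[ℝ] (EuclideanSpace ℝ (Fin d) →L[ℝ] ℝ)))
    (R c : ℝ) (dfun : ℝ → ℝ)
    extends HypothesisI d T f g U φ ψ ξ r κ Cψ α Cφ δ Cs Ce β γ K : Prop where
  hDf : ∀ t ∈ Set.Icc (0 : ℝ) T, ∀ z : E, HasFDerivAt (f t) (Df t z) z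
  Df_cont : ContinuousOn (fun p : ℝ × E => Df p.1 p.2) (Set.Icc 0 T ×ˢ Set.univ)
  hDg : ∀ t ∈ Set.Icc (0 : ℝ) T, ∀ z : E, HasFDerivAt (g t) (Dg t z) z
  Dg_cont : ContinuousOn (fun p : ℝ × E => Dg p.1 p.2) (Set.Icc 0 T ×ˢ Set.univ)
  hDφ : ∀ t ∈ Set.Icc (0 : ℝ) T, ∀ z : E, ∀ v ∈ U,
    HasFDerivAt (fun z' => φ t z' v) (Dφ t z v) z
  Dφ_cont : ContinuousOn (fun p : ℝ × E × E => Dφ p.1 p.2.1 p.2.2)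
    (Set.Icc 0 T ×ˢ Set.univ ×ˢ U)
  hR : 0 < R
  hc : 0 ≤ c
  hd_int : IntegrableOn dfun (Set.Icc (0 : ℝ) T)
  hd_nonneg : ∀ t, 0 ≤ dfun t
  Dφ_growth : ∀ x u : ℝ → E, IsAdmissible T f g U φ ξ x u →
    ∀ᵐ t ∂(volume.restrict (Set.Icc (0 : ℝ) T)), ∀ y : E, ‖y - x t‖ ≤ R →
      ‖Dφ t y (u t)‖ ≤ c * |φ t y (u t)| + dfun t
  hDψ : ∀ t ∈ Set.Icc (0 : ℝ) T, ∀ z : E, HasFDerivAt (fun z' => ψ t z') (Dψ t z) z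
  Dψ_holder : ∃ κ' > (1 / 2 : ℝ), ∀ R' ≥ (0 : ℝ), ∃ K' : ℝ,
    ∀ s ∈ Set.Icc (0 : ℝ) T, ∀ t ∈ Set.Icc (0 : ℝ) T, ∀ y z : E, ‖y‖ ≤ R' → ‖z‖ ≤ R' →
      ‖Dψ t z - Dψ s y‖ ≤ K' * (|t - s| + ‖z - y‖) ^ κ'

/-- The Hamiltonian `H(t, z, μ, v) = φ(t,z,v) + μ(f(t,z) + g(t,z)v)`. -/
noncomputable def Ham {E : Type*} [NormedAddCommGroup E] [NormedSpace ℝ E]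
    (f : ℝ → E → E) (g : ℝ → E → (E →L[ℝ] E)) (φ : ℝ → E → E → ℝ)
    (t : ℝ) (z : E) (μ : E →L[ℝ] ℝ) (v : E) : ℝ :=
  φ t z v + μ (f t z + (g t z) v)

/-- `lam` solves the costate equation along the process `(x, u)`. -/
def IsCostate (d : ℕ) {E : Type*} [NormedAddCommGroup E] [NormedSpace ℝ E]
    (T : ℝ)
    (Df : ℝ → E → (E →L[ℝ] E)) (Dg : ℝ → E → (E →L[ℝ] (E →L[ℝ] E)))
    (Dφ : ℝ → E → E → (E →L[ℝ] ℝ))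
    (Dψ : ℝ → E → (E →L[ℝ] (EuclideanSpace ℝ (Fin d) →L[ℝ] ℝ)))
    (η : ℝ → EuclideanSpace ℝ (Fin d)) (x u : ℝ → E) (lam : ℝ → (E →L[ℝ] ℝ)) : Prop :=
  ContinuousOn lam (Set.Icc 0 T) ∧
  ∀ t ∈ Set.Icc (0 : ℝ) T,
    lam t = (∫ s in t..T, ((lam s).comp (Df s (x s) + (Dg s (x s)).flip (u s))
        + Dφ s (x s) (u s)))
      + youngIntegral t T (fun s => (Dψ s (x s)).flip) η

/-- `(x, u)` is a global minimiser of the cost over admissible processes w.r.t. `ξ`. -/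
def IsOptimal (d : ℕ) {E : Type*} [NormedAddCommGroup E] [NormedSpace ℝ E]
    (T : ℝ) (f : ℝ → E → E) (g : ℝ → E → (E →L[ℝ] E)) (U : Set E)
    (φ : ℝ → E → E → ℝ) (ψ : ℝ → E → (EuclideanSpace ℝ (Fin d) →L[ℝ] ℝ))
    (η : ℝ → EuclideanSpace ℝ (Fin d)) (ξ : E) (x u : ℝ → E) : Prop :=
  IsAdmissible T f g U φ ξ x u ∧
  ∀ x' u' : ℝ → E, IsAdmissible T f g U φ ξ x' u' →
    costA d T φ ψ η x u ≤ costA d T φ ψ η x' u'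

/-- Optimal triple: optimal process together with its costate. -/
def IsOptimalTriple (d : ℕ) {E : Type*} [NormedAddCommGroup E] [NormedSpace ℝ E]
    (T : ℝ) (f : ℝ → E → E) (g : ℝ → E → (E →L[ℝ] E)) (U : Set E)
    (φ : ℝ → E → E → ℝ) (ψ : ℝ → E → (EuclideanSpace ℝ (Fin d) →L[ℝ] ℝ))
    (η : ℝ → EuclideanSpace ℝ (Fin d)) (ξ : E) (r : ℝ)
    (Df : ℝ → E → (E →L[ℝ] E)) (Dg : ℝ → E → (E →L[ℝ] (E →L[ℝ] E)))
    (Dφ : ℝ → E → E → (E →L[ℝ] ℝ))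
    (Dψ : ℝ → E → (E →L[ℝ] (EuclideanSpace ℝ (Fin d) →L[ℝ] ℝ)))
    (x u : ℝ → E) (lam : ℝ → (E →L[ℝ] ℝ)) : Prop :=
  MemUr r T U u ∧ IsOptimal d T f g U φ ψ η ξ x u ∧
  IsCostate d T Df Dg Dφ Dψ η x u lam

/-- `υ` is the (unique) pointwise minimiser of the Hamiltonian over `U`. -/
def IsArgmin {E : Type*} [NormedAddCommGroup E] [NormedSpace ℝ E]
    (T : ℝ) (f : ℝ → E → E) (g : ℝ → E → (E →L[ℝ] E)) (U : Set E)
    (φ : ℝ → E → E → ℝ) (υ : ℝ → E → (E →L[ℝ] ℝ) → E) : Prop :=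
  ∀ t ∈ Set.Icc (0 : ℝ) T, ∀ z : E, ∀ μ : E →L[ℝ] ℝ,
    υ t z μ ∈ U ∧ (∀ v ∈ U, Ham f g φ t z μ (υ t z μ) ≤ Ham f g φ t z μ v) ∧
    (∀ v ∈ U, (∀ w ∈ U, Ham f g φ t z μ v ≤ Ham f g φ t z μ w) → v = υ t z μ)

/-- `(x, lam)` solves the Hamiltonian system with initial condition `x 0 = ξ`. -/
def SolvesHamiltonian (d : ℕ) {E : Type*} [NormedAddCommGroup E] [NormedSpace ℝ E]
    (T : ℝ) (f : ℝ → E → E) (g : ℝ → E → (E →L[ℝ] E))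
    (Df : ℝ → E → (E →L[ℝ] E)) (Dg : ℝ → E → (E →L[ℝ] (E →L[ℝ] E)))
    (Dφ : ℝ → E → E → (E →L[ℝ] ℝ))
    (Dψ : ℝ → E → (E →L[ℝ] (EuclideanSpace ℝ (Fin d) →L[ℝ] ℝ)))
    (η : ℝ → EuclideanSpace ℝ (Fin d)) (υ : ℝ → E → (E →L[ℝ] ℝ) → E)
    (ξ : E) (x : ℝ → E) (lam : ℝ → (E →L[ℝ] ℝ)) : Prop :=
  ContinuousOn x (Set.Icc 0 T) ∧ ContinuousOn lam (Set.Icc 0 T) ∧ x 0 = ξ ∧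
  (∀ t ∈ Set.Icc (0 : ℝ) T,
    x t = ξ + ∫ s in (0 : ℝ)..t, (f s (x s) + (g s (x s)) (υ s (x s) (lam s)))) ∧
  (∀ t ∈ Set.Icc (0 : ℝ) T,
    lam t = (∫ s in t..T, (Dφ s (x s) (υ s (x s) (lam s))
        + (lam s).comp (Df s (x s) + (Dg s (x s)).flip (υ s (x s) (lam s)))))
      + youngIntegral t T (fun s => (Dψ s (x s)).flip) η)

/-- The cost `J(ξ, u)` of the (unique, under Hypothesis II) trajectory started at `ξ`
with control `u`; junk value `0` if no admissible trajectory exists. -/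
noncomputable def Jcost (d : ℕ) {E : Type*} [NormedAddCommGroup E] [NormedSpace ℝ E]
    (T : ℝ) (f : ℝ → E → E) (g : ℝ → E → (E →L[ℝ] E))
    (φ : ℝ → E → E → ℝ) (ψ : ℝ → E → (EuclideanSpace ℝ (Fin d) →L[ℝ] ℝ))
    (η : ℝ → EuclideanSpace ℝ (Fin d)) (ξ : E) (u : ℝ → E) : ℝ :=
  if h : ∃ x : ℝ → E, IsProcessOn T f g ξ x u ∧
      IntegrableOn (fun t => φ t (x t) (u t)) (Set.Icc (0 : ℝ) T)
  then costA d T φ ψ η h.choose u else 0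

/-- The value function `V(ξ) = inf_{u ∈ 𝒰_r} J(ξ, u)` (as an infimum of achieved
finite costs of admissible processes). -/
noncomputable def valueV (d : ℕ) {E : Type*} [NormedAddCommGroup E] [NormedSpace ℝ E]
    (T : ℝ) (f : ℝ → E → E) (g : ℝ → E → (E →L[ℝ] E)) (U : Set E)
    (φ : ℝ → E → E → ℝ) (ψ : ℝ → E → (EuclideanSpace ℝ (Fin d) →L[ℝ] ℝ))
    (η : ℝ → EuclideanSpace ℝ (Fin d)) (r : ℝ) (ξ : E) : ℝ :=
  sInf {a : ℝ | ∃ x u : ℝ → E, MemUr r T U u ∧ IsAdmissible T f g U φ ξ x u ∧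
    a = costA d T φ ψ η x u}

end


/-! ### Auxiliary machinery for the Young integral (added for the proof) -/

noncomputable section YoungAux
attribute [local instance] Classical.propDecidable

/-- `∑_{k<m} (2/max(k,1))^θ`, the running Young–Loève constant. -/
def zA (θ : ℝ) (m : ℕ) : ℝ := ∑ k ∈ Finset.range m, (2 / max (k : ℝ) 1) ^ θ

/-- Uniform bound for `zA`. -/
def zconst (θ : ℝ) : ℝ := 2 ^ θ * (1 + ∑' k : ℕ, ((k : ℝ) + 1) ^ (-θ))

theorem zsummable {θ : ℝ} (hθ : 1 < θ) : Summable (fun k : ℕ => ((k : ℝ) + 1) ^ (-θ)) := by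
  have h1 : Summable (fun n : ℕ => ((n : ℝ) ^ θ)⁻¹) := Real.summable_nat_rpow_inv.mpr hθ
  have h2 := (summable_nat_add_iff 1).mpr h1
  refine h2.congr fun k => ?_
  push_cast
  rw [Real.rpow_neg (by positivity)]

theorem zA_nonneg (θ : ℝ) (m : ℕ) : 0 ≤ zA θ m :=
  Finset.sum_nonneg fun k _ => Real.rpow_nonneg (by positivity) _

theorem zA_succ (θ : ℝ) (m : ℕ) : zA θ (m + 1) = zA θ m + (2 / max (m : ℝ) 1) ^ θ :=
  Finset.sum_range_succ _ m

theorem zA_le {θ : ℝ} (hθ : 1 < θ) (m : ℕ) : zA θ m ≤ zconst θ := by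
  have hsum := zsummable hθ
  have hterm : ∀ k : ℕ, (2 / max (k : ℝ) 1) ^ θ = 2 ^ θ * (max (k : ℝ) 1) ^ (-θ) := by
    intro k
    rw [Real.div_rpow (by norm_num) (by positivity), Real.rpow_neg (by positivity),
      div_eq_mul_inv]
  cases m with
  | zero =>
    simp only [zA, Finset.range_zero, Finset.sum_empty, zconst]
    have : 0 ≤ ∑' k : ℕ, ((k : ℝ) + 1) ^ (-θ) := tsum_nonneg fun k => by positivity
    positivity
  | succ m =>
    have hsplit : zA θ (m + 1)
        = (∑ k ∈ Finset.range m, (2 / max ((k : ℕ) + 1 : ℝ) 1) ^ θ) + (2 / max (0 : ℝ) 1) ^ θ := by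
      unfold zA
      rw [Finset.sum_range_succ']
      norm_num
    have h0 : (2 / max (0 : ℝ) 1) ^ θ = 2 ^ θ * 1 := by norm_num
    have hk : ∀ k : ℕ, (2 / max ((k : ℕ) + 1 : ℝ) 1) ^ θ = 2 ^ θ * ((k : ℝ) + 1) ^ (-θ) := by
      intro k
      have : max ((k : ℕ) + 1 : ℝ) 1 = (k : ℝ) + 1 := by
        rw [max_eq_left]; push_cast; linarith [Nat.cast_nonneg (α := ℝ) k]
      rw [this, Real.div_rpow (by norm_num) (by positivity), Real.rpow_neg (by positivity),
        div_eq_mul_inv]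
    rw [hsplit, h0]
    simp only [hk]
    rw [← Finset.mul_sum]
    have hle : ∑ k ∈ Finset.range m, ((k : ℝ) + 1) ^ (-θ) ≤ ∑' k : ℕ, ((k : ℝ) + 1) ^ (-θ) :=
      hsum.sum_le_tsum _ (fun k _ => by positivity)
    have h2 : (0:ℝ) ≤ 2 ^ θ := by positivity
    unfold zconst
    nlinarith [hle]

theorem zconst_nonneg {θ : ℝ} (hθ : 1 < θ) : 0 ≤ zconst θ := by
  have : 0 ≤ ∑' k : ℕ, ((k : ℝ) + 1) ^ (-θ) := tsum_nonneg fun k => by positivity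
  unfold zconst; positivity

theorem zA_mono (θ : ℝ) : Monotone (zA θ) := by
  intro m n hmn
  exact Finset.sum_le_sum_of_subset_of_nonneg (Finset.range_subset_range.mpr hmn)
    (fun k _ _ => Real.rpow_nonneg (by positivity) _)

theorem phi_le {φ : ℕ → ℕ} {n : ℕ} (hφ : ∀ i < n, φ i ≤ φ (i + 1)) :
    ∀ j, j ≤ n → ∀ i, i ≤ j → φ i ≤ φ j := by
  intro j
  induction j with
  | zero => intro _ i hi; rw [Nat.le_zero.mp hi]
  | succ j ih =>
    intro hj i hi
    rcases Nat.eq_or_lt_of_le hi with rfl | hlt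
    · exact le_rfl
    · exact (ih (by omega) i (by omega)).trans (hφ j (by omega))

theorem sum_blocks {M : Type*} [AddCommMonoid M] (g : ℕ → M) {φ : ℕ → ℕ} {n : ℕ}
    (hφ0 : φ 0 = 0) (hφ : ∀ i < n, φ i ≤ φ (i + 1)) :
    ∀ j, j ≤ n → ∑ k ∈ Finset.range (φ j), g k
      = ∑ i ∈ Finset.range j, ∑ k ∈ Finset.Ico (φ i) (φ (i + 1)), g k := by
  intro j
  induction j with
  | zero => intro _; simp [hφ0]
  | succ j ih =>
    intro hj
    rw [Finset.sum_range_succ, ← ih (by omega), Finset.range_eq_Ico, Finset.range_eq_Ico]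
    exact (Finset.sum_Ico_consecutive g (Nat.zero_le (φ j)) (hφ j (by omega))).symm

/-- The `k`-th point of the partition given by a finite set `P` (junk `b` beyond). -/
def fpts (P : Finset ℝ) (b : ℝ) : ℕ → ℝ := fun k =>
  if h : k < P.card then (P.orderIsoOfFin rfl ⟨k, h⟩ : ℝ) else b

theorem fpts_mem {P : Finset ℝ} {b : ℝ} {k : ℕ} (h : k < P.card) : fpts P b k ∈ P := by
  rw [fpts, dif_pos h]; exact (P.orderIsoOfFin rfl ⟨k, h⟩).2

theorem fpts_strictMono {P : Finset ℝ} {b : ℝ} {k l : ℕ} (hkl : k < l) (hl : l < P.card) :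
    fpts P b k < fpts P b l := by
  rw [fpts, fpts, dif_pos hl, dif_pos (hkl.trans hl)]
  exact_mod_cast (P.orderIsoOfFin rfl).strictMono (by exact_mod_cast hkl : (⟨k, hkl.trans hl⟩ : Fin P.card) < ⟨l, hl⟩)

theorem fpts_mono {P : Finset ℝ} {b : ℝ} (hPb : ∀ x ∈ P, x ≤ b) : Monotone (fpts P b) := by
  intro k l hkl
  by_cases hl : l < P.card
  · rcases Nat.eq_or_lt_of_le hkl with rfl | hlt
    · exact le_rfl
    · exact (fpts_strictMono hlt hl).le
  · by_cases hk : k < P.card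
    · simp only [fpts]
      rw [dif_neg hl, dif_pos hk]
      exact hPb _ (P.orderIsoOfFin rfl ⟨k, hk⟩).2
    · simp only [fpts]
      rw [dif_neg hl, dif_neg hk]

theorem fpts_zero {P : Finset ℝ} {a b : ℝ} (ha : a ∈ P) (hmin : ∀ x ∈ P, a ≤ x) :
    fpts P b 0 = a := by
  have hc : 0 < P.card := Finset.card_pos.mpr ⟨a, ha⟩
  rw [fpts, dif_pos hc]
  have := Finset.coe_orderIsoOfFin_apply P rfl ⟨0, hc⟩
  rw [this, Finset.orderEmbOfFin_zero rfl hc]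
  exact le_antisymm (P.min'_le a ha) (Finset.le_min' _ _ _ hmin)

theorem fpts_last {P : Finset ℝ} {a b : ℝ} (ha : a ∈ P) (hb : b ∈ P)
    (hmax : ∀ x ∈ P, x ≤ b) : fpts P b (P.card - 1) = b := by
  have hc : 0 < P.card := Finset.card_pos.mpr ⟨a, ha⟩
  rw [fpts, dif_pos (by omega)]
  have := Finset.coe_orderIsoOfFin_apply P rfl ⟨P.card - 1, by omega⟩
  rw [this, Finset.orderEmbOfFin_last rfl hc]
  exact le_antisymm (Finset.max'_le _ _ _ hmax) (P.le_max' b hb)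

/-- Index of the `k`-th point of `P` inside a larger set `Q`. -/
def fidx (P Q : Finset ℝ) (b : ℝ) : ℕ → ℕ := fun k =>
  if h : (k < P.card ∧ fpts P b k ∈ Q) then
    ((Q.orderIsoOfFin rfl).symm ⟨fpts P b k, h.2⟩ : ℕ) else Q.card - 1

theorem fidx_spec {P Q : Finset ℝ} {b : ℝ} {k : ℕ} (hk : k < P.card) (hPQ : P ⊆ Q) :
    fpts Q b (fidx P Q b k) = fpts P b k := by
  have hmem : fpts P b k ∈ Q := hPQ (fpts_mem hk)
  rw [fidx, dif_pos ⟨hk, hmem⟩, fpts, dif_pos (Fin.is_lt _)]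
  have : (Q.orderIsoOfFin rfl) ⟨((Q.orderIsoOfFin rfl).symm ⟨fpts P b k, hmem⟩ : ℕ), Fin.is_lt _⟩
      = ⟨fpts P b k, hmem⟩ := by
    rw [show (⟨((Q.orderIsoOfFin rfl).symm ⟨fpts P b k, hmem⟩ : ℕ), Fin.is_lt _⟩ : Fin Q.card)
      = (Q.orderIsoOfFin rfl).symm ⟨fpts P b k, hmem⟩ from rfl]
    exact (Q.orderIsoOfFin rfl).apply_symm_apply _
  rw [this]

theorem fidx_lt {P Q : Finset ℝ} {b : ℝ} {k : ℕ} (hQ : Q.Nonempty) : fidx P Q b k < Q.card := by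
  rw [fidx]
  split
  · exact Fin.is_lt _
  · have := Finset.card_pos.mpr hQ; omega

theorem fidx_zero {P Q : Finset ℝ} {a b : ℝ} (hPQ : P ⊆ Q) (haP : a ∈ P) (haQ : a ∈ Q)
    (hminP : ∀ x ∈ P, a ≤ x) (hminQ : ∀ x ∈ Q, a ≤ x) : fidx P Q b 0 = 0 := by
  have hcP : 0 < P.card := Finset.card_pos.mpr ⟨a, haP⟩
  have hcQ : 0 < Q.card := Finset.card_pos.mpr ⟨a, haQ⟩
  have h0 : fpts P b 0 = a := fpts_zero haP hminP
  have hmem : fpts P b 0 ∈ Q := hPQ (fpts_mem hcP)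
  rw [fidx, dif_pos ⟨hcP, hmem⟩]
  have : (Q.orderIsoOfFin rfl).symm ⟨fpts P b 0, hmem⟩ = ⟨0, hcQ⟩ := by
    rw [OrderIso.symm_apply_eq]
    apply Subtype.ext
    show fpts P b 0 = ((Q.orderIsoOfFin rfl) ⟨0, hcQ⟩ : ℝ)
    rw [h0, Finset.coe_orderIsoOfFin_apply, Finset.orderEmbOfFin_zero rfl hcQ]
    exact le_antisymm (Finset.le_min' _ _ _ hminQ) (Q.min'_le a haQ)
  rw [this]

theorem fidx_last {P Q : Finset ℝ} {a b : ℝ} (hPQ : P ⊆ Q) (haP : a ∈ P) (hbP : b ∈ P)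
    (hbQ : b ∈ Q) (hmaxP : ∀ x ∈ P, x ≤ b) (hmaxQ : ∀ x ∈ Q, x ≤ b) :
    fidx P Q b (P.card - 1) = Q.card - 1 := by
  have hcP : 0 < P.card := Finset.card_pos.mpr ⟨b, hbP⟩
  have hcQ : 0 < Q.card := Finset.card_pos.mpr ⟨b, hbQ⟩
  have h0 : fpts P b (P.card - 1) = b := fpts_last haP hbP hmaxP
  have hmem : fpts P b (P.card - 1) ∈ Q := hPQ (fpts_mem (by omega))
  rw [fidx, dif_pos ⟨by omega, hmem⟩]
  have : (Q.orderIsoOfFin rfl).symm ⟨fpts P b (P.card - 1), hmem⟩ = ⟨Q.card - 1, by omega⟩ := by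
    rw [OrderIso.symm_apply_eq]
    apply Subtype.ext
    show fpts P b (P.card - 1) = ((Q.orderIsoOfFin rfl) ⟨Q.card - 1, by omega⟩ : ℝ)
    rw [h0, Finset.coe_orderIsoOfFin_apply, Finset.orderEmbOfFin_last rfl hcQ]
    exact le_antisymm (Q.le_max' b hbQ) (Finset.max'_le _ _ _ hmaxQ)
  rw [this]

theorem fidx_step {P Q : Finset ℝ} {b : ℝ} {k : ℕ} (hPQ : P ⊆ Q) (hk : k + 1 < P.card) :
    fidx P Q b k ≤ fidx P Q b (k + 1) := by
  have hm1 : fpts P b k ∈ Q := hPQ (fpts_mem (by omega))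
  have hm2 : fpts P b (k + 1) ∈ Q := hPQ (fpts_mem hk)
  rw [fidx, fidx, dif_pos ⟨by omega, hm1⟩, dif_pos ⟨hk, hm2⟩]
  have hle : (⟨fpts P b k, hm1⟩ : Q) ≤ ⟨fpts P b (k + 1), hm2⟩ :=
    Subtype.mk_le_mk.mpr (fpts_strictMono (Nat.lt_succ_self k) hk).le
  exact_mod_cast (Q.orderIsoOfFin rfl).symm.monotone hle

theorem fpts_le {P : Finset ℝ} {b : ℝ} {k l : ℕ} (hkl : k ≤ l) (hl : l < P.card) :
    fpts P b k ≤ fpts P b l := by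
  rcases Nat.eq_or_lt_of_le hkl with rfl | hlt
  · exact le_rfl
  · exact (fpts_strictMono hlt hl).le

theorem fpts_succ_le {P : Finset ℝ} {b : ℝ} {i : ℕ} (hi : i + 1 < P.card) {x : ℝ}
    (hx : x ∈ P) (hgt : fpts P b i < x) : fpts P b (i + 1) ≤ x := by
  set e := P.orderIsoOfFin rfl with he
  set κ : Fin P.card := e.symm ⟨x, hx⟩ with hκ
  have hex : fpts P b (κ : ℕ) = x := by
    rw [fpts, dif_pos κ.isLt]
    have : (⟨(κ : ℕ), κ.isLt⟩ : Fin P.card) = κ := rfl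
    rw [this, hκ, he]
    exact congrArg Subtype.val ((P.orderIsoOfFin rfl).apply_symm_apply ⟨x, hx⟩)
  have hik : i < (κ : ℕ) := by
    by_contra hle
    push_neg at hle
    exact absurd (hex ▸ fpts_le hle (by omega)) (not_le.mpr hgt)
  exact hex ▸ fpts_le hik κ.isLt

section Dedup
variable {t : ℕ → ℝ} {n : ℕ} {a b : ℝ}

/-- Index map realising the deduplicated partition inside the original one. -/
def dphi (t : ℕ → ℝ) (n : ℕ) (P : Finset ℝ) (b : ℝ) : ℕ → ℕ := fun k =>
  if k = 0 then 0 else Nat.findGreatest (fun j => t j = fpts P b k) n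

theorem dphi_le (t : ℕ → ℝ) (n : ℕ) (P : Finset ℝ) (b : ℝ) (k : ℕ) :
    dphi t n P b k ≤ n := by
  rw [dphi]; split
  · omega
  · exact Nat.findGreatest_le n

theorem dedup_mem_bounds (ht : Monotone t) (h0 : t 0 = a) (hn : t n = b) :
    a ∈ Finset.image t (Finset.range (n + 1)) ∧ b ∈ Finset.image t (Finset.range (n + 1)) ∧
    (∀ x ∈ Finset.image t (Finset.range (n + 1)), a ≤ x) ∧
    (∀ x ∈ Finset.image t (Finset.range (n + 1)), x ≤ b) := by
  refine ⟨Finset.mem_image.mpr ⟨0, Finset.mem_range.mpr (by omega), h0⟩,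
    Finset.mem_image.mpr ⟨n, Finset.mem_range.mpr (by omega), hn⟩, ?_, ?_⟩
  · rintro x hx
    obtain ⟨j, _, rfl⟩ := Finset.mem_image.mp hx
    exact h0 ▸ ht (Nat.zero_le j)
  · rintro x hx
    obtain ⟨j, hj, rfl⟩ := Finset.mem_image.mp hx
    exact hn ▸ ht (Nat.lt_succ_iff.mp (Finset.mem_range.mp hj))

theorem dphi_spec (ht : Monotone t) (h0 : t 0 = a) (hn : t n = b)
    {k : ℕ} (hk : k < (Finset.image t (Finset.range (n + 1))).card) :
    t (dphi t n (Finset.image t (Finset.range (n + 1))) b k)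
      = fpts (Finset.image t (Finset.range (n + 1))) b k := by
  set P := Finset.image t (Finset.range (n + 1)) with hP
  obtain ⟨haP, hbP, hminP, hmaxP⟩ := dedup_mem_bounds ht h0 hn
  rw [dphi]
  split
  · rename_i hk0; subst hk0
    rw [h0, fpts_zero haP hminP]
  · obtain ⟨j, hj, hje⟩ := Finset.mem_image.mp (fpts_mem hk (b := b))
    exact Nat.findGreatest_spec (P := fun j => t j = fpts P b k)
      (Nat.lt_succ_iff.mp (Finset.mem_range.mp hj)) hje

theorem dphi_zero (t : ℕ → ℝ) (n : ℕ) (P : Finset ℝ) (b : ℝ) : dphi t n P b 0 = 0 := by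
  rw [dphi]; simp

theorem dphi_last (ht : Monotone t) (h0 : t 0 = a) (hn : t n = b)
    (hcard : 2 ≤ (Finset.image t (Finset.range (n + 1))).card) :
    dphi t n (Finset.image t (Finset.range (n + 1))) b
      ((Finset.image t (Finset.range (n + 1))).card - 1) = n := by
  set P := Finset.image t (Finset.range (n + 1)) with hP
  obtain ⟨haP, hbP, hminP, hmaxP⟩ := dedup_mem_bounds ht h0 hn
  rw [dphi, if_neg (by omega : ¬ P.card - 1 = 0)]
  have hfb : fpts P b (P.card - 1) = b := fpts_last haP hbP hmaxP
  have h1 : n ≤ Nat.findGreatest (fun j => t j = fpts P b (P.card - 1)) n :=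
    Nat.le_findGreatest le_rfl (by rw [hfb]; exact hn)
  have h2 := Nat.findGreatest_le (P := fun j => t j = fpts P b (P.card - 1)) n
  omega

theorem dphi_step (ht : Monotone t) (h0 : t 0 = a) (hn : t n = b)
    {k : ℕ} (hk : k + 1 < (Finset.image t (Finset.range (n + 1))).card) :
    dphi t n (Finset.image t (Finset.range (n + 1))) b k
      ≤ dphi t n (Finset.image t (Finset.range (n + 1))) b (k + 1) := by
  set P := Finset.image t (Finset.range (n + 1)) with hP
  by_cases hk0 : k = 0
  · subst hk0; rw [dphi_zero]; omega
  · have hv : fpts P b k < fpts P b (k + 1) := fpts_strictMono (by omega) hk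
    have hk' := hk
    rw [hP] at hk'
    have e1 : t (dphi t n P b k) = fpts P b k := dphi_spec ht h0 hn (by omega)
    have e2 : t (dphi t n P b (k + 1)) = fpts P b (k + 1) := dphi_spec ht h0 hn hk'
    by_contra hcon
    push_neg at hcon
    have := ht hcon.le
    rw [e1, e2] at this
    exact absurd this (not_le.mpr hv)

theorem dedup_interval (ht : Monotone t) (h0 : t 0 = a) (hn : t n = b)
    {i : ℕ} (hi : i + 1 < (Finset.image t (Finset.range (n + 1))).card) :
    ∃ j, j < n ∧ fpts (Finset.image t (Finset.range (n + 1))) b i = t j ∧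
      fpts (Finset.image t (Finset.range (n + 1))) b (i + 1) = t (j + 1) := by
  set P := Finset.image t (Finset.range (n + 1)) with hP
  obtain ⟨haP, hbP, hminP, hmaxP⟩ := dedup_mem_bounds ht h0 hn
  set j := Nat.findGreatest (fun j => t j = fpts P b i) n with hj
  have hji : t j = fpts P b i := by
    obtain ⟨j', hj', hje⟩ := Finset.mem_image.mp (fpts_mem (by omega : i < P.card) (b := b))
    exact Nat.findGreatest_spec (P := fun j => t j = fpts P b i)
      (Nat.lt_succ_iff.mp (Finset.mem_range.mp hj')) hje
  have hjn : j ≤ n := Nat.findGreatest_le n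
  have hib : fpts P b i < b := by
    calc fpts P b i < fpts P b (i + 1) := fpts_strictMono (by omega) hi
      _ ≤ b := hmaxP _ (fpts_mem hi)
  have hjlt : j < n := by
    rcases Nat.eq_or_lt_of_le hjn with heq | h
    · exfalso
      rw [heq, hn] at hji
      exact absurd hji.symm (ne_of_lt hib)
    · exact h
  have hnotnext : ¬ t (j + 1) = fpts P b i :=
    Nat.findGreatest_is_greatest (Nat.lt_succ_self j) (by omega)
  have hgt : fpts P b i < t (j + 1) := by
    have := ht (Nat.le_succ j)
    rw [hji] at this
    exact lt_of_le_of_ne this (fun hc => hnotnext hc.symm)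
  have hmem : t (j + 1) ∈ P := Finset.mem_image.mpr ⟨j + 1, Finset.mem_range.mpr (by omega), rfl⟩
  have hle1 : fpts P b (i + 1) ≤ t (j + 1) := fpts_succ_le hi hmem hgt
  have hle2 : t (j + 1) ≤ fpts P b (i + 1) := by
    by_contra hcon
    push_neg at hcon
    obtain ⟨j', hj', hje⟩ := Finset.mem_image.mp (fpts_mem hi (b := b))
    have hj'n : j' ≤ n := Nat.lt_succ_iff.mp (Finset.mem_range.mp hj')
    have h1 : t j < t j' := by rw [hji, hje]; exact fpts_strictMono (by omega) hi
    have hjj' : j < j' := by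
      by_contra hcc; push_neg at hcc; exact absurd (ht hcc) (not_le.mpr h1)
    have : t (j + 1) ≤ t j' := ht (by omega)
    rw [hje] at this
    exact absurd this (not_le.mpr hcon)
  exact ⟨j, hjlt, hji.symm, le_antisymm hle1 hle2⟩

end Dedup

theorem dedup_card {t : ℕ → ℝ} {n : ℕ} {a b : ℝ} (ht : Monotone t) (h0 : t 0 = a)
    (hn : t n = b) (hab : a < b) : 2 ≤ (Finset.image t (Finset.range (n + 1))).card := by
  have hsub : ({a, b} : Finset ℝ) ⊆ Finset.image t (Finset.range (n + 1)) := by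
    intro x hx
    rcases Finset.mem_insert.mp hx with rfl | hx
    · exact Finset.mem_image.mpr ⟨0, Finset.mem_range.mpr (by omega), h0⟩
    · rw [Finset.mem_singleton.mp hx]
      exact Finset.mem_image.mpr ⟨n, Finset.mem_range.mpr (by omega), hn⟩
  calc 2 = ({a, b} : Finset ℝ).card := by
        rw [Finset.card_insert_of_notMem (by simp [hab.ne]), Finset.card_singleton]
    _ ≤ _ := Finset.card_le_card hsub

/-- Uniform partition of `[a,b]` into `N` pieces (constant beyond `N`). -/
def uni (a b : ℝ) (N : ℕ) : ℕ → ℝ := fun k => a + ((min k N : ℕ) : ℝ) * ((b - a) / N)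

theorem uni_mono {a b : ℝ} (hab : a ≤ b) (N : ℕ) : Monotone (uni a b N) := by
  intro k l hkl
  have h1 : ((min k N : ℕ) : ℝ) ≤ ((min l N : ℕ) : ℝ) := by
    exact_mod_cast min_le_min_right N hkl |>.trans_eq rfl
  have h2 : (0 : ℝ) ≤ (b - a) / N := by
    apply div_nonneg (by linarith) (Nat.cast_nonneg N)
  exact add_le_add_right (mul_le_mul_of_nonneg_right h1 h2) a

theorem uni_zero (a b : ℝ) (N : ℕ) : uni a b N 0 = a := by
  simp [uni]

theorem uni_last (a b : ℝ) {N : ℕ} (hN : 0 < N) : uni a b N N = b := by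
  simp only [uni, min_self]
  field_simp
  ring

theorem uni_step (a b : ℝ) {N i : ℕ} (hi : i < N) :
    uni a b N (i + 1) - uni a b N i = (b - a) / N := by
  simp only [uni, min_eq_left (by omega : i ≤ N), min_eq_left (by omega : i + 1 ≤ N)]
  push_cast
  ring

variable {V : Type*} [NormedAddCommGroup V]

/-- Set of `p`-dissection sums of `η` over `[s, t]`. -/
def ysumSet (η : ℝ → V) (p s t : ℝ) : Set ℝ :=
  {v | ∃ (n : ℕ) (c : ℕ → ℝ), Monotone c ∧ c 0 = s ∧ c n = t ∧
    v = ∑ k ∈ Finset.range n, ‖η (c (k + 1)) - η (c k)‖ ^ p}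

theorem ysumSet_single {η : ℝ → V} {p s t : ℝ} (hst : s ≤ t) :
    ‖η t - η s‖ ^ p ∈ ysumSet η p s t := by
  refine ⟨1, fun k => if k = 0 then s else t, ?_, by simp, by simp, by simp⟩
  intro k l hkl
  by_cases hk : k = 0
  · by_cases hl : l = 0 <;> simp [hk, hl, hst]
  · have hl : ¬ l = 0 := by omega
    simp [hk, hl]

theorem ysumSet_nonempty (η : ℝ → V) (p : ℝ) {s t : ℝ} (hst : s ≤ t) :
    (ysumSet η p s t).Nonempty := ⟨_, ysumSet_single hst⟩

theorem ysumSet_nonneg {η : ℝ → V} {p s t : ℝ} {v : ℝ} (hv : v ∈ ysumSet η p s t) :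
    0 ≤ v := by
  obtain ⟨n, c, _, _, _, rfl⟩ := hv
  exact Finset.sum_nonneg fun k _ => Real.rpow_nonneg (norm_nonneg _) p

theorem ysumSet_concat {η : ℝ → V} {p s u t : ℝ} {v₁ v₂ : ℝ}
    (h1 : v₁ ∈ ysumSet η p s u) (h2 : v₂ ∈ ysumSet η p u t) :
    v₁ + v₂ ∈ ysumSet η p s t := by
  obtain ⟨n₁, c₁, hm₁, h0₁, hn₁, rfl⟩ := h1
  obtain ⟨n₂, c₂, hm₂, h0₂, hn₂, rfl⟩ := h2
  set c : ℕ → ℝ := fun k => if k ≤ n₁ then c₁ k else c₂ (k - n₁) with hc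
  refine ⟨n₁ + n₂, c, ?_, ?_, ?_, ?_⟩
  · intro k l hkl
    simp only [hc]
    by_cases hk : k ≤ n₁
    · by_cases hl : l ≤ n₁
      · simp only [if_pos hk, if_pos hl]; exact hm₁ hkl
      · simp only [if_pos hk, if_neg hl]
        calc c₁ k ≤ c₁ n₁ := hm₁ hk
          _ = c₂ 0 := by rw [hn₁, h0₂]
          _ ≤ c₂ (l - n₁) := hm₂ (Nat.zero_le _)
    · have hl : ¬ l ≤ n₁ := by omega
      simp only [if_neg hk, if_neg hl]
      exact hm₂ (by omega)
  · simp only [hc, if_pos (Nat.zero_le n₁)]; exact h0₁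
  · simp only [hc]
    by_cases hn2 : n₂ = 0
    · subst hn2
      simp only [Nat.add_zero, if_pos (le_refl n₁)]
      exact hn₁.trans (h0₂.symm.trans hn₂)
    · rw [if_neg (by omega), Nat.add_sub_cancel_left]
      exact hn₂
  · rw [Finset.range_eq_Ico (a := n₁ + n₂),
      ← Finset.sum_Ico_consecutive _ (Nat.zero_le n₁) (by omega : n₁ ≤ n₁ + n₂),
      ← Finset.range_eq_Ico]
    congr 1
    · refine Finset.sum_congr rfl fun k hk => ?_
      rw [Finset.mem_range] at hk
      have e1 : c k = c₁ k := by simp only [hc]; rw [if_pos (by omega)]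
      have e2 : c (k + 1) = c₁ (k + 1) := by
        simp only [hc]
        by_cases hk1 : k + 1 ≤ n₁
        · rw [if_pos hk1]
        · have hkn : k + 1 = n₁ := by omega
          rw [if_neg hk1, hkn, Nat.sub_self, h0₂, ← hn₁]
      rw [e1, e2]
    · rw [Finset.sum_Ico_eq_sum_range, Nat.add_sub_cancel_left]
      refine Finset.sum_congr rfl fun k hk => ?_
      rw [Finset.mem_range] at hk
      have e1 : c (n₁ + k) = c₂ k := by
        simp only [hc]
        by_cases hk0 : k = 0
        · subst hk0
          rw [if_pos (by omega), Nat.add_zero, hn₁, h0₂]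
        · rw [if_neg (by omega), Nat.add_sub_cancel_left]
      have e2 : c (n₁ + k + 1) = c₂ (k + 1) := by
        simp only [hc]
        rw [if_neg (by omega)]
        congr 1
        omega
      rw [e1, e2]

/-- Extension bound: every dissection sum over a subinterval is dominated by the
global dissection-sum bound. -/
theorem ysumSet_le_of_global {η : ℝ → V} {p T M : ℝ}
    (hM : ∀ (n : ℕ) (c : ℕ → ℝ), Monotone c → c 0 = 0 → c n = T →
      ∑ k ∈ Finset.range n, ‖η (c (k + 1)) - η (c k)‖ ^ p ≤ M)
    {s t : ℝ} (hs : 0 ≤ s) (hst : s ≤ t) (htT : t ≤ T) :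
    ∀ v ∈ ysumSet η p s t, v ≤ M := by
  rintro v ⟨n, c, hm, h0, hn, rfl⟩
  set c' : ℕ → ℝ := fun k => if k = 0 then 0 else (if k ≤ n + 1 then c (k - 1) else T) with hc'
  have hc'm : Monotone c' := by
    intro k l hkl
    rcases Nat.eq_zero_or_pos k with rfl | hk
    · by_cases hl : l = 0
      · simp [hc', hl]
      · simp only [hc', if_pos rfl, if_neg hl]
        split
        · calc (0:ℝ) ≤ s := hs
            _ = c 0 := h0.symm
            _ ≤ c (l - 1) := hm (Nat.zero_le _)
        · calc (0:ℝ) ≤ s := hs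
            _ ≤ t := hst
            _ ≤ T := htT
    · have hk0 : ¬ k = 0 := by omega
      have hl0 : ¬ l = 0 := by omega
      simp only [hc', if_neg hk0, if_neg hl0]
      by_cases hkn : k ≤ n + 1
      · by_cases hln : l ≤ n + 1
        · rw [if_pos hkn, if_pos hln]; exact hm (by omega)
        · rw [if_pos hkn, if_neg hln]
          calc c (k - 1) ≤ c n := hm (by omega)
            _ = t := hn
            _ ≤ T := htT
      · have hln : ¬ l ≤ n + 1 := by omega
        rw [if_neg hkn, if_neg hln]
  have hc'0 : c' 0 = 0 := by simp [hc']
  have hc'last : c' (n + 2) = T := by simp only [hc']; rw [if_neg (by omega), if_neg (by omega)]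
  have hsub : ∑ k ∈ Finset.range n, ‖η (c (k + 1)) - η (c k)‖ ^ p
      ≤ ∑ k ∈ Finset.range (n + 2), ‖η (c' (k + 1)) - η (c' k)‖ ^ p := by
    have hinner : ∑ k ∈ Finset.range n, ‖η (c (k + 1)) - η (c k)‖ ^ p
        = ∑ k ∈ Finset.Ico 1 (n + 1), ‖η (c' (k + 1)) - η (c' k)‖ ^ p := by
      rw [Finset.sum_Ico_eq_sum_range]
      simp only [Nat.add_sub_cancel]
      refine Finset.sum_congr rfl fun k hk => ?_
      rw [Finset.mem_range] at hk
      have e1 : c' (1 + k) = c k := by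
        simp only [hc']; rw [if_neg (by omega), if_pos (by omega)]
        congr 1; omega
      have e2 : c' (1 + k + 1) = c (k + 1) := by
        simp only [hc']; rw [if_neg (by omega), if_pos (by omega)]
        congr 1; omega
      rw [e1, e2]
    rw [hinner]
    refine Finset.sum_le_sum_of_subset_of_nonneg ?_ fun k _ _ => Real.rpow_nonneg (norm_nonneg _) p
    intro k hk
    rw [Finset.mem_Ico] at hk
    rw [Finset.mem_range]
    omega
  exact hsub.trans (hM (n + 2) c' hc'm hc'0 hc'last)


variable {V W : Type*} [NormedAddCommGroup V] [NormedSpace ℝ V]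
  [NormedAddCommGroup W] [NormedSpace ℝ W]

/-- Left Riemann sum of `X dY` along partition points `t 0, …, t n`. -/
def ylsum (X : ℝ → (V →L[ℝ] W)) (Y : ℝ → V) (t : ℕ → ℝ) (n : ℕ) : W :=
  ∑ i ∈ Finset.range n, X (t i) (Y (t (i + 1)) - Y (t i))

/-- Tagged Riemann sum of `X dY`. -/
def ytsum (X : ℝ → (V →L[ℝ] W)) (Y : ℝ → V) (t τ : ℕ → ℝ) (n : ℕ) : W :=
  ∑ i ∈ Finset.range n, X (τ i) (Y (t (i + 1)) - Y (t i))

theorem ylsum_delete (X : ℝ → (V →L[ℝ] W)) (Y : ℝ → V) (t : ℕ → ℝ) {n j : ℕ}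
    (hj : j + 2 ≤ n) :
    ylsum X Y t n = ylsum X Y (fun i => if i ≤ j then t i else t (i + 1)) (n - 1)
      + (X (t (j + 1)) - X (t j)) (Y (t (j + 2)) - Y (t (j + 1))) := by
  set t' : ℕ → ℝ := fun i => if i ≤ j then t i else t (i + 1) with ht'
  set f : ℕ → W := fun i => X (t i) (Y (t (i + 1)) - Y (t i)) with hf
  set f' : ℕ → W := fun i => X (t' i) (Y (t' (i + 1)) - Y (t' i)) with hf'
  have hsplit1 : ∑ i ∈ Finset.range n, f i
      = (∑ i ∈ Finset.range j, f i) + f j + f (j + 1) + ∑ i ∈ Finset.Ico (j + 2) n, f i := by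
    rw [Finset.range_eq_Ico, ← Finset.sum_Ico_consecutive f (Nat.zero_le (j+2)) hj,
      ← Finset.range_eq_Ico, Finset.sum_range_succ, Finset.sum_range_succ]
  have hsplit2 : ∑ i ∈ Finset.range (n - 1), f' i
      = (∑ i ∈ Finset.range j, f' i) + f' j + ∑ i ∈ Finset.Ico (j + 1) (n - 1), f' i := by
    rw [Finset.range_eq_Ico, ← Finset.sum_Ico_consecutive f' (Nat.zero_le (j+1)) (by omega),
      ← Finset.range_eq_Ico, Finset.sum_range_succ]
  have he1 : ∀ i ∈ Finset.range j, f' i = f i := by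
    intro i hi
    rw [Finset.mem_range] at hi
    simp only [hf', hf, ht', if_pos (by omega : i ≤ j), if_pos (by omega : i + 1 ≤ j)]
  have he2 : f' j = X (t j) (Y (t (j + 2)) - Y (t j)) := by
    simp only [hf', ht', if_pos (le_refl j), if_neg (by omega : ¬ j + 1 ≤ j)]
  have he3 : ∑ i ∈ Finset.Ico (j + 1) (n - 1), f' i = ∑ i ∈ Finset.Ico (j + 2) n, f i := by
    rw [Finset.sum_Ico_eq_sum_range, Finset.sum_Ico_eq_sum_range]
    have harith : n - 1 - (j + 1) = n - (j + 2) := by omega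
    rw [harith]
    refine Finset.sum_congr rfl fun k hk => ?_
    simp only [hf', hf, ht', if_neg (by omega : ¬ j + 1 + k ≤ j),
      if_neg (by omega : ¬ j + 1 + k + 1 ≤ j)]
    have e1 : j + 1 + k + 1 = j + 2 + k := by omega
    have e2 : j + 1 + k + 1 + 1 = j + 2 + k + 1 := by omega
    rw [e1]
  have key : f j + f (j + 1) - X (t j) (Y (t (j + 2)) - Y (t j))
      = (X (t (j + 1)) - X (t j)) (Y (t (j + 2)) - Y (t (j + 1))) := by
    simp only [hf, ContinuousLinearMap.sub_apply, map_sub]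
    abel
  calc ylsum X Y t n = ∑ i ∈ Finset.range n, f i := rfl
    _ = (∑ i ∈ Finset.range j, f' i) + f' j + ∑ i ∈ Finset.Ico (j + 1) (n - 1), f' i
        + (f j + f (j + 1) - X (t j) (Y (t (j + 2)) - Y (t j))) := by
        rw [hsplit1, Finset.sum_congr rfl he1, he2, he3]; abel
    _ = _ := by rw [key, ← hsplit2]; rfl


/-- Bundled hypotheses for the abstract Young integral construction. -/
structure YoungSetup (X : ℝ → (V →L[ℝ] W)) (Y : ℝ → V) (a b : ℝ)
    (ω : ℝ → ℝ → ℝ) (C₁ C₂ h₁ h₂ : ℝ) : Prop where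
  hab : a ≤ b
  hC₁ : 0 ≤ C₁
  hC₂ : 0 ≤ C₂
  hh₁ : 0 < h₁
  hh₂ : 0 < h₂
  hθ : 1 < h₁ + h₂
  hω0 : ∀ s t, a ≤ s → s ≤ t → t ≤ b → 0 ≤ ω s t
  hωadd : ∀ s u t, a ≤ s → s ≤ u → u ≤ t → t ≤ b → ω s u + ω u t ≤ ω s t
  hX : ∀ s t, a ≤ s → s ≤ t → t ≤ b → ‖X t - X s‖ ≤ C₁ * ω s t ^ h₁
  hY : ∀ s t, a ≤ s → s ≤ t → t ≤ b → ‖Y t - Y s‖ ≤ C₂ * ω s t ^ h₂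

namespace YoungSetup

variable {X : ℝ → (V →L[ℝ] W)} {Y : ℝ → V} {a b : ℝ} {ω : ℝ → ℝ → ℝ}
  {C₁ C₂ h₁ h₂ : ℝ} (h : YoungSetup X Y a b ω C₁ C₂ h₁ h₂)

include h

theorem ωmono {s s' t' t : ℝ} (h1 : a ≤ s) (h2 : s ≤ s') (h3 : s' ≤ t')
    (h4 : t' ≤ t) (h5 : t ≤ b) : ω s' t' ≤ ω s t := by
  have hA := h.hωadd s s' t h1 h2 (h3.trans h4) h5
  have hB := h.hωadd s' t' t (h1.trans h2) h3 h4 h5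
  have h0 := h.hω0 s s' h1 h2 ((h3.trans h4).trans h5)
  have h0' := h.hω0 t' t (h1.trans (h2.trans h3)) h4 h5
  linarith

theorem chain_sum {t : ℕ → ℝ} (ht : Monotone t) (h0 : a ≤ t 0) :
    ∀ n : ℕ, t n ≤ b → ∑ i ∈ Finset.range n, ω (t i) (t (i + 1)) ≤ ω (t 0) (t n) := by
  intro n
  induction n with
  | zero => intro hb; simp [h.hω0 (t 0) (t 0) h0 le_rfl hb]
  | succ n ih =>
    intro hb
    have hb' : t n ≤ b := (ht (Nat.le_succ n)).trans hb
    rw [Finset.sum_range_succ]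
    have := h.hωadd (t 0) (t n) (t (n + 1)) h0 (ht (Nat.zero_le n)) (ht (Nat.le_succ n)) hb
    linarith [ih hb']

theorem skip_sum {t : ℕ → ℝ} (ht : Monotone t) (h0 : a ≤ t 0) :
    ∀ k : ℕ, t (k + 1) ≤ b →
      ∑ j ∈ Finset.range k, ω (t j) (t (j + 2)) ≤ ω (t 0) (t k) + ω (t 0) (t (k + 1)) := by
  intro k
  induction k with
  | zero =>
    intro hb
    simpa using add_nonneg (h.hω0 (t 0) (t 0) h0 le_rfl ((ht (by omega)).trans hb))
      (h.hω0 (t 0) (t 1) h0 (ht (by omega)) hb)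
  | succ k ih =>
    intro hb
    have hb' : t (k + 1) ≤ b := (ht (by omega)).trans hb
    rw [Finset.sum_range_succ]
    have hadd := h.hωadd (t 0) (t k) (t (k + 2)) h0 (ht (Nat.zero_le k)) (ht (by omega)) hb
    have := ih hb'
    linarith


/-- The Young–Loève estimate. -/
theorem young_loeve : ∀ n : ℕ, ∀ t : ℕ → ℝ, Monotone t → a ≤ t 0 → t n ≤ b →
    ‖ylsum X Y t n - X (t 0) (Y (t n) - Y (t 0))‖
      ≤ C₁ * C₂ * zA (h₁ + h₂) n * ω (t 0) (t n) ^ (h₁ + h₂) := by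
  intro n
  induction n using Nat.strong_induction_on with
  | _ n IH =>
  intro t ht h0 hb
  set θ := h₁ + h₂ with hθdef
  have hθ1 : 1 < θ := h.hθ
  have hωab : 0 ≤ ω (t 0) (t n) := h.hω0 _ _ h0 (ht (Nat.zero_le n)) hb
  have hrhs : 0 ≤ C₁ * C₂ * zA θ n * ω (t 0) (t n) ^ θ :=
    mul_nonneg (mul_nonneg (mul_nonneg h.hC₁ h.hC₂) (zA_nonneg θ n)) (Real.rpow_nonneg hωab θ)
  match n, IH with
  | 0, _ => simpa [ylsum] using hrhs
  | 1, _ => simp only [ylsum, Finset.sum_range_one]; simpa using hrhs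
  | (m + 2), IH =>
    set n := m + 2
    -- choose the point to delete
    have hskip := h.skip_sum ht h0 (m + 1) (by simpa using hb)
    have hmono01 : ω (t 0) (t (m + 1)) ≤ ω (t 0) (t (m + 2)) :=
      h.ωmono h0 le_rfl (ht (by omega)) (ht (by omega)) hb
    have hsum_le : ∑ j ∈ Finset.range (m + 1), ω (t j) (t (j + 2))
        ≤ ∑ j ∈ Finset.range (m + 1), (2 * ω (t 0) (t (m + 2)) / (m + 1)) := by
      rw [Finset.sum_const, Finset.card_range, nsmul_eq_mul]
      have : ((m : ℝ) + 1) * (2 * ω (t 0) (t (m + 2)) / ((m : ℝ) + 1))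
          = 2 * ω (t 0) (t (m + 2)) := by field_simp
      push_cast
      rw [this]
      calc ∑ j ∈ Finset.range (m + 1), ω (t j) (t (j + 2))
          ≤ ω (t 0) (t (m + 1)) + ω (t 0) (t (m + 2)) := hskip
        _ ≤ 2 * ω (t 0) (t (m + 2)) := by linarith
    obtain ⟨j, hjmem, hjle⟩ := Finset.exists_le_of_sum_le ⟨0, Finset.mem_range.mpr (by omega)⟩ hsum_le
    rw [Finset.mem_range] at hjmem
    have hj2 : j + 2 ≤ n := by omega
    set t' : ℕ → ℝ := fun i => if i ≤ j then t i else t (i + 1) with ht'def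
    have ht'mono : Monotone t' := by
      intro i i' hii'
      simp only [ht'def]
      by_cases hi : i ≤ j
      · by_cases hi' : i' ≤ j
        · simp only [if_pos hi, if_pos hi']; exact ht hii'
        · simp only [if_pos hi, if_neg hi']; exact ht (by omega)
      · have hi' : ¬ i' ≤ j := by omega
        simp only [if_neg hi, if_neg hi']; exact ht (by omega)
    have ht'0 : t' 0 = t 0 := by simp [ht'def]
    have ht'last : t' (n - 1) = t n := by
      have hnn : n - 1 + 1 = n := by omega
      simp only [ht'def, if_neg (by omega : ¬ n - 1 ≤ j), hnn]
    have hIH := IH (n - 1) (by omega) t' ht'mono (ht'0 ▸ h0) (ht'last ▸ hb)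
    rw [ht'0, ht'last] at hIH
    -- the deleted term
    have hdel := ylsum_delete X Y t hj2
    rw [← ht'def] at hdel
    have hd1 : a ≤ t j := h0.trans (ht (Nat.zero_le j))
    have hd2 : t (j + 2) ≤ b := (ht (by omega)).trans hb
    have hnormdel : ‖(X (t (j + 1)) - X (t j)) (Y (t (j + 2)) - Y (t (j + 1)))‖
        ≤ C₁ * C₂ * ω (t j) (t (j + 2)) ^ θ := by
      have hb1 := h.hX (t j) (t (j + 1)) hd1 (ht (by omega)) ((ht (by omega)).trans hb)
      have hb2 := h.hY (t (j + 1)) (t (j + 2)) (hd1.trans (ht (by omega))) (ht (by omega)) hd2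
      have hω1 : ω (t j) (t (j + 1)) ≤ ω (t j) (t (j + 2)) :=
        h.ωmono hd1 le_rfl (ht (by omega)) (ht (by omega)) hd2
      have hω2 : ω (t (j + 1)) (t (j + 2)) ≤ ω (t j) (t (j + 2)) :=
        h.ωmono hd1 (ht (by omega)) (ht (by omega)) le_rfl hd2
      have hωj0 : 0 ≤ ω (t j) (t (j + 1)) := h.hω0 _ _ hd1 (ht (by omega)) ((ht (by omega)).trans hb)
      have hωj0' : 0 ≤ ω (t (j + 1)) (t (j + 2)) :=
        h.hω0 _ _ (hd1.trans (ht (by omega))) (ht (by omega)) hd2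
      have hωj2 : 0 ≤ ω (t j) (t (j + 2)) := h.hω0 _ _ hd1 (ht (by omega)) hd2
      calc ‖(X (t (j + 1)) - X (t j)) (Y (t (j + 2)) - Y (t (j + 1)))‖
          ≤ ‖X (t (j + 1)) - X (t j)‖ * ‖Y (t (j + 2)) - Y (t (j + 1))‖ :=
            ContinuousLinearMap.le_opNorm _ _
        _ ≤ (C₁ * ω (t j) (t (j + 1)) ^ h₁) * (C₂ * ω (t (j + 1)) (t (j + 2)) ^ h₂) := by
            exact mul_le_mul hb1 hb2 (norm_nonneg _)
              (mul_nonneg h.hC₁ (Real.rpow_nonneg hωj0 h₁))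
        _ ≤ (C₁ * ω (t j) (t (j + 2)) ^ h₁) * (C₂ * ω (t j) (t (j + 2)) ^ h₂) := by
            have e1 : ω (t j) (t (j + 1)) ^ h₁ ≤ ω (t j) (t (j + 2)) ^ h₁ :=
              Real.rpow_le_rpow hωj0 hω1 h.hh₁.le
            have e2 : ω (t (j + 1)) (t (j + 2)) ^ h₂ ≤ ω (t j) (t (j + 2)) ^ h₂ :=
              Real.rpow_le_rpow hωj0' hω2 h.hh₂.le
            exact mul_le_mul (mul_le_mul_of_nonneg_left e1 h.hC₁)
              (mul_le_mul_of_nonneg_left e2 h.hC₂)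
              (mul_nonneg h.hC₂ (Real.rpow_nonneg hωj0' h₂))
              (mul_nonneg h.hC₁ (Real.rpow_nonneg hωj2 h₁))
        _ = C₁ * C₂ * ω (t j) (t (j + 2)) ^ θ := by
            have hne : h₁ + h₂ ≠ 0 := by
              have := h.hh₁; have := h.hh₂; intro hc; linarith
            have hsplitp : ω (t j) (t (j + 2)) ^ θ
                = ω (t j) (t (j + 2)) ^ h₁ * ω (t j) (t (j + 2)) ^ h₂ :=
              Real.rpow_add' hωj2 hne
            rw [hsplitp]; ring
    -- bound the deleted ω by the average
    have havg : ω (t j) (t (j + 2)) ^ θ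
        ≤ (2 / ((m : ℝ) + 1)) ^ θ * ω (t 0) (t (m + 2)) ^ θ := by
      have hωj2 : 0 ≤ ω (t j) (t (j + 2)) :=
        h.hω0 _ _ hd1 (ht (by omega)) hd2
      have hrw : 2 * ω (t 0) (t (m + 2)) / ((m : ℝ) + 1)
          = (2 / ((m : ℝ) + 1)) * ω (t 0) (t (m + 2)) := by ring
      have hle : ω (t j) (t (j + 2)) ≤ (2 / ((m : ℝ) + 1)) * ω (t 0) (t (m + 2)) := by
        rw [← hrw]; exact_mod_cast hjle
      calc ω (t j) (t (j + 2)) ^ θ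
          ≤ ((2 / ((m : ℝ) + 1)) * ω (t 0) (t (m + 2))) ^ θ :=
            Real.rpow_le_rpow hωj2 hle (by linarith)
        _ = (2 / ((m : ℝ) + 1)) ^ θ * ω (t 0) (t (m + 2)) ^ θ :=
            Real.mul_rpow (by positivity) hωab
    -- identify the zA increment
    have hmax : max ((n - 1 : ℕ) : ℝ) 1 = ((m : ℝ) + 1) := by
      have : ((n - 1 : ℕ) : ℝ) = (m : ℝ) + 1 := by push_cast [show n - 1 = m + 1 by omega]; ring
      rw [this, max_eq_left (by linarith [Nat.cast_nonneg (α := ℝ) m])]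
    have hzA : zA θ n = zA θ (n - 1) + (2 / ((m : ℝ) + 1)) ^ θ := by
      have := zA_succ θ (n - 1)
      rw [show n - 1 + 1 = n by omega] at this
      rw [this, hmax]
    -- conclude
    calc ‖ylsum X Y t n - X (t 0) (Y (t n) - Y (t 0))‖
        = ‖(ylsum X Y t' (n - 1) - X (t 0) (Y (t n) - Y (t 0)))
            + (X (t (j + 1)) - X (t j)) (Y (t (j + 2)) - Y (t (j + 1)))‖ := by
          rw [hdel]; congr 1; abel
      _ ≤ ‖ylsum X Y t' (n - 1) - X (t 0) (Y (t n) - Y (t 0))‖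
            + ‖(X (t (j + 1)) - X (t j)) (Y (t (j + 2)) - Y (t (j + 1)))‖ := norm_add_le _ _
      _ ≤ C₁ * C₂ * zA θ (n - 1) * ω (t 0) (t n) ^ θ
            + C₁ * C₂ * ((2 / ((m : ℝ) + 1)) ^ θ * ω (t 0) (t (m + 2)) ^ θ) := by
          refine add_le_add hIH (hnormdel.trans ?_)
          have h12 : 0 ≤ C₁ * C₂ := mul_nonneg h.hC₁ h.hC₂
          exact mul_le_mul_of_nonneg_left havg h12
      _ = C₁ * C₂ * zA θ n * ω (t 0) (t n) ^ θ := by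
          rw [hzA]; ring


theorem refine_est {t s : ℕ → ℝ} {n m : ℕ} {φ : ℕ → ℕ}
    (hs : Monotone s) (hφ0 : φ 0 = 0) (hφn : φ n = m)
    (hφ : ∀ i < n, φ i ≤ φ (i + 1)) (hst : ∀ i ≤ n, s (φ i) = t i)
    (ha : a ≤ s 0) (hb : s m ≤ b) :
    ‖ylsum X Y s m - ylsum X Y t n‖
      ≤ C₁ * C₂ * zconst (h₁ + h₂) * ∑ i ∈ Finset.range n, ω (t i) (t (i + 1)) ^ (h₁ + h₂) := by
  set θ := h₁ + h₂ with hθdef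
  set g : ℕ → W := fun k => X (s k) (Y (s (k + 1)) - Y (s k)) with hg
  have hφle := phi_le hφ
  have hdecomp : ylsum X Y s m
      = ∑ i ∈ Finset.range n, ∑ k ∈ Finset.Ico (φ i) (φ (i + 1)), g k := by
    rw [← hφn]; exact sum_blocks g hφ0 hφ n le_rfl
  have hterm : ∀ i < n, ‖(∑ k ∈ Finset.Ico (φ i) (φ (i + 1)), g k)
      - X (t i) (Y (t (i + 1)) - Y (t i))‖
      ≤ C₁ * C₂ * zconst θ * ω (t i) (t (i + 1)) ^ θ := by
    intro i hi
    set u : ℕ → ℝ := fun k => s (φ i + k) with hu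
    set l : ℕ := φ (i + 1) - φ i with hl
    have hul : u l = t (i + 1) := by
      simp only [hu, hl]
      rw [show φ i + (φ (i + 1) - φ i) = φ (i + 1) by
        have := hφ i hi; omega]
      exact hst (i + 1) (by omega)
    have hu0 : u 0 = t i := by simp only [hu]; rw [Nat.add_zero]; exact hst i (by omega)
    have hblock : ∑ k ∈ Finset.Ico (φ i) (φ (i + 1)), g k = ylsum X Y u l := by
      rw [Finset.sum_Ico_eq_sum_range]
      rfl
    have humono : Monotone u := fun p q hpq => hs (by omega)
    have hau : a ≤ u 0 := ha.trans (hs (Nat.zero_le _))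
    have hub : u l ≤ b := by
      rw [hul, ← hst (i + 1) (by omega)]
      have : φ (i + 1) ≤ m := hφn ▸ hφle n le_rfl (i + 1) (by omega)
      exact (hs this).trans hb
    have hyl := h.young_loeve l u humono hau hub
    rw [hu0, hul] at hyl
    rw [hblock]
    refine hyl.trans ?_
    have hω0' : 0 ≤ ω (t i) (t (i + 1)) := by
      rw [← hu0, ← hul]
      exact h.hω0 _ _ hau (humono (Nat.zero_le l)) hub
    
    have hC12 : 0 ≤ C₁ * C₂ := mul_nonneg h.hC₁ h.hC₂
    exact mul_le_mul_of_nonneg_right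
      (mul_le_mul_of_nonneg_left (zA_le h.hθ l) hC12) (Real.rpow_nonneg hω0' _)
  calc ‖ylsum X Y s m - ylsum X Y t n‖
      = ‖∑ i ∈ Finset.range n, ((∑ k ∈ Finset.Ico (φ i) (φ (i + 1)), g k)
          - X (t i) (Y (t (i + 1)) - Y (t i)))‖ := by
        rw [Finset.sum_sub_distrib, ← hdecomp]; rfl
    _ ≤ ∑ i ∈ Finset.range n, ‖(∑ k ∈ Finset.Ico (φ i) (φ (i + 1)), g k)
          - X (t i) (Y (t (i + 1)) - Y (t i))‖ := norm_sum_le _ _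
    _ ≤ ∑ i ∈ Finset.range n, C₁ * C₂ * zconst θ * ω (t i) (t (i + 1)) ^ θ :=
        Finset.sum_le_sum fun i hi => hterm i (Finset.mem_range.mp hi)
    _ = C₁ * C₂ * zconst θ * ∑ i ∈ Finset.range n, ω (t i) (t (i + 1)) ^ θ := by
        rw [Finset.mul_sum]

theorem mesh_sum {t : ℕ → ℝ} {n : ℕ} (ht : Monotone t) (h0 : a ≤ t 0) (hb : t n ≤ b)
    {ε : ℝ} (hε : 0 ≤ ε) (hmesh : ∀ i < n, ω (t i) (t (i + 1)) ≤ ε) :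
    ∑ i ∈ Finset.range n, ω (t i) (t (i + 1)) ^ (h₁ + h₂)
      ≤ ε ^ (h₁ + h₂ - 1) * ω (t 0) (t n) := by
  have hθ1 : 1 < h₁ + h₂ := h.hθ
  have hstep : ∀ i < n, ω (t i) (t (i + 1)) ^ (h₁ + h₂)
      ≤ ε ^ (h₁ + h₂ - 1) * ω (t i) (t (i + 1)) := by
    intro i hi
    have hωi : 0 ≤ ω (t i) (t (i + 1)) :=
      h.hω0 _ _ (h0.trans (ht (Nat.zero_le i))) (ht (by omega))
        ((ht (by omega : i + 1 ≤ n)).trans hb)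
    have hne : (h₁ + h₂ - 1) + 1 ≠ 0 := by intro hc; linarith
    have h1 : ω (t i) (t (i + 1)) ^ ((h₁ + h₂ - 1) + 1)
        = ω (t i) (t (i + 1)) ^ (h₁ + h₂ - 1) * ω (t i) (t (i + 1)) ^ (1 : ℝ) :=
      Real.rpow_add' hωi hne
    rw [show (h₁ + h₂ - 1) + 1 = h₁ + h₂ by ring, Real.rpow_one] at h1
    rw [h1]
    exact mul_le_mul_of_nonneg_right
      (Real.rpow_le_rpow hωi (hmesh i hi) (by linarith)) hωi
  calc ∑ i ∈ Finset.range n, ω (t i) (t (i + 1)) ^ (h₁ + h₂)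
      ≤ ∑ i ∈ Finset.range n, ε ^ (h₁ + h₂ - 1) * ω (t i) (t (i + 1)) :=
        Finset.sum_le_sum fun i hi => hstep i (Finset.mem_range.mp hi)
    _ = ε ^ (h₁ + h₂ - 1) * ∑ i ∈ Finset.range n, ω (t i) (t (i + 1)) :=
        (Finset.mul_sum _ _ _).symm
    _ ≤ ε ^ (h₁ + h₂ - 1) * ω (t 0) (t n) :=
        mul_le_mul_of_nonneg_left (h.chain_sum ht h0 n hb) (Real.rpow_nonneg hε _)


/-- Tag-adjustment estimate. -/
theorem tag_est {t τ : ℕ → ℝ} {n : ℕ} (ht : Monotone t) (h0 : a ≤ t 0) (hb : t n ≤ b)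
    (hτ : ∀ i < n, τ i ∈ Set.Icc (t i) (t (i + 1))) :
    ‖ytsum X Y t τ n - ylsum X Y t n‖
      ≤ C₁ * C₂ * ∑ i ∈ Finset.range n, ω (t i) (t (i + 1)) ^ (h₁ + h₂) := by
  have hterm : ∀ i < n, ‖(X (τ i) - X (t i)) (Y (t (i + 1)) - Y (t i))‖
      ≤ C₁ * C₂ * ω (t i) (t (i + 1)) ^ (h₁ + h₂) := by
    intro i hi
    have hai : a ≤ t i := h0.trans (ht (Nat.zero_le i))
    have hbi : t (i + 1) ≤ b := (ht (by omega : i + 1 ≤ n)).trans hb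
    obtain ⟨hτ1, hτ2⟩ := hτ i hi
    have hωi : 0 ≤ ω (t i) (t (i + 1)) := h.hω0 _ _ hai (ht (by omega)) hbi
    have hX' : ‖X (τ i) - X (t i)‖ ≤ C₁ * ω (t i) (t (i + 1)) ^ h₁ := by
      refine (h.hX (t i) (τ i) hai hτ1 (hτ2.trans hbi)).trans ?_
      refine mul_le_mul_of_nonneg_left (Real.rpow_le_rpow
        (h.hω0 _ _ hai hτ1 (hτ2.trans hbi))
        (h.ωmono hai le_rfl hτ1 hτ2 hbi) h.hh₁.le) h.hC₁
    have hY' : ‖Y (t (i + 1)) - Y (t i)‖ ≤ C₂ * ω (t i) (t (i + 1)) ^ h₂ :=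
      h.hY (t i) (t (i + 1)) hai (ht (by omega)) hbi
    have hne : h₁ + h₂ ≠ 0 := by have := h.hh₁; have := h.hh₂; intro hc; linarith
    calc ‖(X (τ i) - X (t i)) (Y (t (i + 1)) - Y (t i))‖
        ≤ ‖X (τ i) - X (t i)‖ * ‖Y (t (i + 1)) - Y (t i)‖ := ContinuousLinearMap.le_opNorm _ _
      _ ≤ (C₁ * ω (t i) (t (i + 1)) ^ h₁) * (C₂ * ω (t i) (t (i + 1)) ^ h₂) :=
          mul_le_mul hX' hY' (norm_nonneg _)
            (mul_nonneg h.hC₁ (Real.rpow_nonneg hωi _))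
      _ = C₁ * C₂ * ω (t i) (t (i + 1)) ^ (h₁ + h₂) := by
          rw [Real.rpow_add' hωi hne]; ring
  calc ‖ytsum X Y t τ n - ylsum X Y t n‖
      = ‖∑ i ∈ Finset.range n, (X (τ i) - X (t i)) (Y (t (i + 1)) - Y (t i))‖ := by
        rw [ytsum, ylsum, ← Finset.sum_sub_distrib]
        simp only [ContinuousLinearMap.sub_apply]
    _ ≤ ∑ i ∈ Finset.range n, ‖(X (τ i) - X (t i)) (Y (t (i + 1)) - Y (t i))‖ := norm_sum_le _ _
    _ ≤ ∑ i ∈ Finset.range n, C₁ * C₂ * ω (t i) (t (i + 1)) ^ (h₁ + h₂) :=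
        Finset.sum_le_sum fun i hi => hterm i (Finset.mem_range.mp hi)
    _ = C₁ * C₂ * ∑ i ∈ Finset.range n, ω (t i) (t (i + 1)) ^ (h₁ + h₂) := by
        rw [Finset.mul_sum]

/-- One-sided master estimate: a tagged partition with `ω`-mesh `≤ ε` is close to the
left sum over any refinement coming from a union with another partition. -/
theorem side_est (hab' : a < b) {ε : ℝ} (hε : 0 ≤ ε)
    {t τ : ℕ → ℝ} {n : ℕ} (ht : Monotone t) (ht0 : t 0 = a) (htn : t n = b)
    (hτ : ∀ i < n, τ i ∈ Set.Icc (t i) (t (i + 1)))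
    (hm : ∀ i < n, ω (t i) (t (i + 1)) ≤ ε)
    {R : Finset ℝ} (hPR : Finset.image t (Finset.range (n + 1)) ⊆ R)
    (haR : a ∈ R) (hbR : b ∈ R) (hminR : ∀ x ∈ R, a ≤ x) (hmaxR : ∀ x ∈ R, x ≤ b) :
    ‖ytsum X Y t τ n - ylsum X Y (fpts R b) (R.card - 1)‖
      ≤ C₁ * C₂ * (1 + 2 * zconst (h₁ + h₂)) * (ε ^ (h₁ + h₂ - 1) * ω a b) := by
  set θ := h₁ + h₂ with hθdef
  set P := Finset.image t (Finset.range (n + 1)) with hP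
  obtain ⟨haP, hbP, hminP, hmaxP⟩ := dedup_mem_bounds ht ht0 htn
  have hcard : 2 ≤ P.card := dedup_card ht ht0 htn hab'
  have hC12 : 0 ≤ C₁ * C₂ := mul_nonneg h.hC₁ h.hC₂
  have hz0 : 0 ≤ zconst θ := zconst_nonneg h.hθ
  have hta : a ≤ t 0 := le_of_eq ht0.symm
  have htb : t n ≤ b := le_of_eq htn
  -- mesh bound for the original partition
  have hmesh1 : ∑ i ∈ Finset.range n, ω (t i) (t (i + 1)) ^ θ ≤ ε ^ (θ - 1) * ω a b := by
    have := h.mesh_sum ht hta htb hε hm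
    rwa [ht0, htn] at this
  -- the deduplicated partition
  have hfm : Monotone (fpts P b) := fpts_mono hmaxP
  have hf0 : fpts P b 0 = a := fpts_zero haP hminP
  have hfl : fpts P b (P.card - 1) = b := fpts_last haP hbP hmaxP
  have hmeshP : ∀ i < P.card - 1, ω (fpts P b i) (fpts P b (i + 1)) ≤ ε := by
    intro i hi
    obtain ⟨j, hj, hj1, hj2⟩ := dedup_interval ht ht0 htn (by omega : i + 1 < P.card)
    rw [hj1, hj2]
    exact hm j hj
  have hmesh2 : ∑ i ∈ Finset.range (P.card - 1), ω (fpts P b i) (fpts P b (i + 1)) ^ θ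
      ≤ ε ^ (θ - 1) * ω a b := by
    have := h.mesh_sum hfm (le_of_eq hf0.symm) (le_of_eq hfl) hε hmeshP
    rwa [hf0, hfl] at this
  -- step 1: tags
  have step1 : ‖ytsum X Y t τ n - ylsum X Y t n‖ ≤ C₁ * C₂ * (ε ^ (θ - 1) * ω a b) :=
    (h.tag_est ht hta htb hτ).trans (mul_le_mul_of_nonneg_left hmesh1 hC12)
  -- step 2: dedup (coarse = fpts P, fine = t)
  have step2 : ‖ylsum X Y t n - ylsum X Y (fpts P b) (P.card - 1)‖
      ≤ C₁ * C₂ * zconst θ * (ε ^ (θ - 1) * ω a b) := by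
    have hre := h.refine_est (t := fpts P b) (s := t) (φ := dphi t n P b) ht
      (dphi_zero t n P b) (dphi_last ht ht0 htn hcard)
      (fun i hi => dphi_step ht ht0 htn (by
        have hi' : i < P.card - 1 := hi
        show i + 1 < P.card
        omega))
      (fun i hi => dphi_spec ht ht0 htn (by
        have hi' : i ≤ P.card - 1 := hi
        show i < P.card
        omega)) hta htb
    refine hre.trans ?_
    have := mul_le_mul_of_nonneg_left hmesh2 (mul_nonneg hC12 hz0)
    linarith [this]
  -- step 3: merge (coarse = fpts P, fine = fpts R)
  have step3 : ‖ylsum X Y (fpts R b) (R.card - 1) - ylsum X Y (fpts P b) (P.card - 1)‖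
      ≤ C₁ * C₂ * zconst θ * (ε ^ (θ - 1) * ω a b) := by
    have hre := h.refine_est (t := fpts P b) (s := fpts R b) (φ := fidx P R b)
      (fpts_mono hmaxR) (fidx_zero hPR haP haR hminP hminR)
      (fidx_last hPR haP hbP hbR hmaxP hmaxR)
      (fun i hi => fidx_step hPR (by omega : i + 1 < P.card))
      (fun i hi => fidx_spec (by omega : i < P.card) hPR)
      (le_of_eq (fpts_zero haR hminR).symm)
      (le_of_eq (fpts_last haR hbR hmaxR))
    refine hre.trans ?_
    have := mul_le_mul_of_nonneg_left hmesh2 (mul_nonneg hC12 hz0)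
    linarith [this]
  calc ‖ytsum X Y t τ n - ylsum X Y (fpts R b) (R.card - 1)‖
      ≤ ‖ytsum X Y t τ n - ylsum X Y t n‖
        + ‖ylsum X Y t n - ylsum X Y (fpts P b) (P.card - 1)‖
        + ‖ylsum X Y (fpts R b) (R.card - 1) - ylsum X Y (fpts P b) (P.card - 1)‖ := by
        have h1 : ytsum X Y t τ n - ylsum X Y (fpts R b) (R.card - 1)
            = (ytsum X Y t τ n - ylsum X Y t n)
              + (ylsum X Y t n - ylsum X Y (fpts P b) (P.card - 1))
              - (ylsum X Y (fpts R b) (R.card - 1) - ylsum X Y (fpts P b) (P.card - 1)) := by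
          abel
        rw [h1]
        exact (norm_sub_le _ _).trans (by gcongr; exact norm_add_le _ _)
    _ ≤ C₁ * C₂ * (ε ^ (θ - 1) * ω a b) + C₁ * C₂ * zconst θ * (ε ^ (θ - 1) * ω a b)
        + C₁ * C₂ * zconst θ * (ε ^ (θ - 1) * ω a b) := by
        exact add_le_add (add_le_add step1 step2) step3
    _ = C₁ * C₂ * (1 + 2 * zconst θ) * (ε ^ (θ - 1) * ω a b) := by ring


end YoungSetup


namespace YoungSetup

theorem pick_eps {C e θ : ℝ} (hC : 0 ≤ C) (he : 0 < e) (hθ : 1 < θ) :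
    ∃ ε₀ > (0 : ℝ), C * ε₀ ^ (θ - 1) < e := by
  have hden : (0 : ℝ) < C + 1 := by linarith
  have hq : (0 : ℝ) < e / (C + 1) := by positivity
  refine ⟨min 1 ((e / (C + 1)) ^ (θ - 1)⁻¹), lt_min one_pos (by positivity), ?_⟩
  have hmin0 : 0 ≤ min 1 ((e / (C + 1)) ^ (θ - 1)⁻¹) :=
    le_min zero_le_one (by positivity)
  have h1 : (min 1 ((e / (C + 1)) ^ (θ - 1)⁻¹)) ^ (θ - 1)
      ≤ ((e / (C + 1)) ^ (θ - 1)⁻¹) ^ (θ - 1) :=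
    Real.rpow_le_rpow hmin0 (min_le_right _ _) (by linarith)
  rw [Real.rpow_inv_rpow hq.le (by intro hc; linarith)] at h1
  calc C * (min 1 ((e / (C + 1)) ^ (θ - 1)⁻¹)) ^ (θ - 1)
      ≤ C * (e / (C + 1)) := mul_le_mul_of_nonneg_left h1 hC
    _ < e := by
        rw [mul_div_assoc']
        rw [div_lt_iff₀ hden]
        nlinarith

variable {V W : Type*} [NormedAddCommGroup V] [NormedSpace ℝ V]
  [NormedAddCommGroup W] [NormedSpace ℝ W]
variable {X : ℝ → (V →L[ℝ] W)} {Y : ℝ → V} {a b : ℝ} {ω : ℝ → ℝ → ℝ}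
  {C₁ C₂ h₁ h₂ : ℝ} (h : YoungSetup X Y a b ω C₁ C₂ h₁ h₂)
include h

/-- Two tagged partitions with small `ω`-mesh have close Riemann sums. -/
theorem tagged_close (hab' : a < b) {ε : ℝ} (hε : 0 ≤ ε)
    {t τ : ℕ → ℝ} {n : ℕ} (ht : Monotone t) (ht0 : t 0 = a) (htn : t n = b)
    (hτ : ∀ i < n, τ i ∈ Set.Icc (t i) (t (i + 1)))
    (hm : ∀ i < n, ω (t i) (t (i + 1)) ≤ ε)
    {s σ : ℕ → ℝ} {m : ℕ} (hs : Monotone s) (hs0 : s 0 = a) (hsm : s m = b)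
    (hσ : ∀ i < m, σ i ∈ Set.Icc (s i) (s (i + 1)))
    (hm2 : ∀ i < m, ω (s i) (s (i + 1)) ≤ ε) :
    ‖ytsum X Y t τ n - ytsum X Y s σ m‖
      ≤ C₁ * C₂ * (2 + 4 * zconst (h₁ + h₂)) * (ε ^ (h₁ + h₂ - 1) * ω a b) := by
  classical
  set R := Finset.image t (Finset.range (n + 1)) ∪ Finset.image s (Finset.range (m + 1)) with hR
  obtain ⟨haP, hbP, hminP, hmaxP⟩ := dedup_mem_bounds ht ht0 htn
  obtain ⟨haQ, hbQ, hminQ, hmaxQ⟩ := dedup_mem_bounds hs hs0 hsm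
  have haR : a ∈ R := Finset.mem_union_left _ haP
  have hbR : b ∈ R := Finset.mem_union_left _ hbP
  have hminR : ∀ x ∈ R, a ≤ x := fun x hx =>
    (Finset.mem_union.mp hx).elim (hminP x) (hminQ x)
  have hmaxR : ∀ x ∈ R, x ≤ b := fun x hx =>
    (Finset.mem_union.mp hx).elim (hmaxP x) (hmaxQ x)
  have e1 := h.side_est hab' hε ht ht0 htn hτ hm
    (R := R) Finset.subset_union_left haR hbR hminR hmaxR
  have e2 := h.side_est hab' hε hs hs0 hsm hσ hm2
    (R := R) Finset.subset_union_right haR hbR hminR hmaxR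
  calc ‖ytsum X Y t τ n - ytsum X Y s σ m‖
      ≤ ‖ytsum X Y t τ n - ylsum X Y (fpts R b) (R.card - 1)‖
        + ‖ytsum X Y s σ m - ylsum X Y (fpts R b) (R.card - 1)‖ := by
        have : ytsum X Y t τ n - ytsum X Y s σ m
            = (ytsum X Y t τ n - ylsum X Y (fpts R b) (R.card - 1))
              - (ytsum X Y s σ m - ylsum X Y (fpts R b) (R.card - 1)) := by abel
        rw [this]
        exact norm_sub_le _ _
    _ ≤ C₁ * C₂ * (1 + 2 * zconst (h₁ + h₂)) * (ε ^ (h₁ + h₂ - 1) * ω a b)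
        + C₁ * C₂ * (1 + 2 * zconst (h₁ + h₂)) * (ε ^ (h₁ + h₂ - 1) * ω a b) :=
        add_le_add e1 e2
    _ = C₁ * C₂ * (2 + 4 * zconst (h₁ + h₂)) * (ε ^ (h₁ + h₂ - 1) * ω a b) := by ring


open Filter in
theorem exists_young_limit [CompleteSpace W] (hab' : a < b)
    (hsmall : ∀ ε > (0 : ℝ), ∃ δ > (0 : ℝ), ∀ u v : ℝ,
      a ≤ u → u ≤ v → v ≤ b → v - u < δ → ω u v < ε) :
    ∃ I : W, ∀ ε > (0 : ℝ), ∃ δ > (0 : ℝ), ∀ (n : ℕ) (t τ : ℕ → ℝ),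
      Monotone t → t 0 = a → t n = b → (∀ i < n, τ i ∈ Set.Icc (t i) (t (i + 1))) →
      (∀ i < n, t (i + 1) - t i < δ) → ‖ytsum X Y t τ n - I‖ < ε := by
  classical
  set θ := h₁ + h₂ with hθdef
  have hθ1 : 1 < θ := h.hθ
  have hωab : 0 ≤ ω a b := h.hω0 a b le_rfl hab'.le le_rfl
  set Cc : ℝ := C₁ * C₂ * (2 + 4 * zconst θ) * ω a b with hCc
  have hCc0 : 0 ≤ Cc := by
    have := zconst_nonneg hθ1
    have := mul_nonneg h.hC₁ h.hC₂
    positivity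
  -- key: any two tagged partitions of mesh < δ(e) are e-close
  have key : ∀ e > (0 : ℝ), ∃ δ > (0 : ℝ),
      ∀ (n : ℕ) (t τ : ℕ → ℝ), Monotone t → t 0 = a → t n = b →
      (∀ i < n, τ i ∈ Set.Icc (t i) (t (i + 1))) → (∀ i < n, t (i + 1) - t i < δ) →
      ∀ (m : ℕ) (s σ : ℕ → ℝ), Monotone s → s 0 = a → s m = b →
      (∀ i < m, σ i ∈ Set.Icc (s i) (s (i + 1))) → (∀ i < m, s (i + 1) - s i < δ) →
      ‖ytsum X Y t τ n - ytsum X Y s σ m‖ < e := by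
    intro e he
    obtain ⟨ε₀, hε₀, hlt⟩ := pick_eps hCc0 he hθ1
    obtain ⟨δ, hδ, hδω⟩ := hsmall ε₀ hε₀
    refine ⟨δ, hδ, ?_⟩
    intro n t τ ht ht0 htn hτ hmesh m s σ hs hs0 hsm hσ hmesh2
    have hωm : ∀ i < n, ω (t i) (t (i + 1)) ≤ ε₀ := by
      intro i hi
      exact (hδω (t i) (t (i + 1)) (ht0 ▸ ht (Nat.zero_le i)) (ht (by omega))
        (htn ▸ ht (by omega : i + 1 ≤ n)) (hmesh i hi)).le
    have hωm2 : ∀ i < m, ω (s i) (s (i + 1)) ≤ ε₀ := by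
      intro i hi
      exact (hδω (s i) (s (i + 1)) (hs0 ▸ hs (Nat.zero_le i)) (hs (by omega))
        (hsm ▸ hs (by omega : i + 1 ≤ m)) (hmesh2 i hi)).le
    have := h.tagged_close hab' hε₀.le ht ht0 htn hτ hωm hs hs0 hsm hσ hωm2
    calc ‖ytsum X Y t τ n - ytsum X Y s σ m‖
        ≤ C₁ * C₂ * (2 + 4 * zconst θ) * (ε₀ ^ (θ - 1) * ω a b) := this
      _ = Cc * ε₀ ^ (θ - 1) := by rw [hCc]; ring
      _ < e := hlt
  -- the approximating sequence along uniform partitions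
  set S : ℕ → W := fun q => ytsum X Y (uni a b (q + 1)) (uni a b (q + 1)) (q + 1) with hS
  have huni : ∀ q : ℕ, Monotone (uni a b (q + 1)) ∧ uni a b (q + 1) 0 = a ∧
      uni a b (q + 1) (q + 1) = b ∧
      (∀ i < q + 1, uni a b (q + 1) i ∈
        Set.Icc (uni a b (q + 1) i) (uni a b (q + 1) (i + 1))) := by
    intro q
    refine ⟨uni_mono hab'.le _, uni_zero a b _, uni_last a b (by omega), fun i hi => ?_⟩
    exact ⟨le_rfl, uni_mono hab'.le _ (Nat.le_succ i)⟩
  have hmesh_uni : ∀ q : ℕ, ∀ {δ : ℝ}, (b - a) / (q + 1 : ℕ) < δ →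
      ∀ i < q + 1, uni a b (q + 1) (i + 1) - uni a b (q + 1) i < δ := by
    intro q δ hq i hi
    rw [uni_step a b hi]
    exact hq
  have hmesh_small : ∀ {δ : ℝ}, 0 < δ → ∃ N₀ : ℕ, ∀ q ≥ N₀, (b - a) / (q + 1 : ℕ) < δ := by
    intro δ hδ
    obtain ⟨N₀, hN₀⟩ := exists_nat_gt ((b - a) / δ)
    refine ⟨N₀, fun q hq => ?_⟩
    rw [div_lt_iff₀ (by positivity)]
    have h1 : (b - a) / δ < (q + 1 : ℕ) := by
      calc (b - a) / δ < N₀ := hN₀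
        _ ≤ (q + 1 : ℕ) := by exact_mod_cast Nat.le_succ_of_le hq
    calc b - a = ((b - a) / δ) * δ := by field_simp
      _ < ((q + 1 : ℕ) : ℝ) * δ := by
          exact mul_lt_mul_of_pos_right h1 hδ
      _ = δ * ((q + 1 : ℕ) : ℝ) := by ring
  have hcauchy : CauchySeq S := by
    rw [Metric.cauchySeq_iff]
    intro e he
    obtain ⟨δ, hδ, hkey⟩ := key e he
    obtain ⟨N₀, hN₀⟩ := hmesh_small hδ
    refine ⟨N₀, fun p hp q hq => ?_⟩
    rw [dist_eq_norm]
    obtain ⟨hm1, hz1, hl1, hτ1⟩ := huni p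
    obtain ⟨hm2, hz2, hl2, hτ2⟩ := huni q
    exact hkey (p + 1) _ _ hm1 hz1 hl1 hτ1 (hmesh_uni p (hN₀ p hp))
      (q + 1) _ _ hm2 hz2 hl2 hτ2 (hmesh_uni q (hN₀ q hq))
  obtain ⟨I, hI⟩ := cauchySeq_tendsto_of_complete hcauchy
  refine ⟨I, ?_⟩
  intro ε hε
  obtain ⟨δ, hδ, hkey⟩ := key (ε / 2) (by linarith)
  refine ⟨δ, hδ, ?_⟩
  intro n t τ ht ht0 htn hτ hmesh
  obtain ⟨N₀, hN₀⟩ := hmesh_small hδ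
  have htend := (Metric.tendsto_atTop.mp hI) (ε / 2) (by linarith)
  obtain ⟨q₀, hq₀⟩ := htend
  set q := max q₀ N₀ with hq
  obtain ⟨hm2, hz2, hl2, hτ2⟩ := huni q
  have h1 : ‖ytsum X Y t τ n - S q‖ < ε / 2 :=
    hkey n t τ ht ht0 htn hτ hmesh (q + 1) _ _ hm2 hz2 hl2 hτ2
      (hmesh_uni q (hN₀ q (le_max_right _ _)))
  have h2 : ‖S q - I‖ < ε / 2 := by
    rw [← dist_eq_norm]
    exact hq₀ q (le_max_left _ _)
  calc ‖ytsum X Y t τ n - I‖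
      ≤ ‖ytsum X Y t τ n - S q‖ + ‖S q - I‖ := by
        have : ytsum X Y t τ n - I = (ytsum X Y t τ n - S q) + (S q - I) := by abel
        rw [this]; exact norm_add_le _ _
    _ < ε / 2 + ε / 2 := add_lt_add h1 h2
    _ = ε := by ring


end YoungSetup


section PVarHelpers
open ENNReal

theorem finSum_to_ofReal {V : Type*} [NormedAddCommGroup V] (x : ℝ → V) {n : ℕ}
    (t : Fin (n + 1) → ℝ) (c : ℕ → ℝ)
    (hc : ∀ k, ∀ hk : k ≤ n, c k = t ⟨k, by omega⟩) (q : ℝ) (hq : 0 ≤ q) :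
    ∑ i : Fin n, (‖x (t i.succ) - x (t i.castSucc)‖₊ : ℝ≥0∞) ^ q
      = ENNReal.ofReal (∑ k ∈ Finset.range n, ‖x (c (k + 1)) - x (c k)‖ ^ q) := by
  rw [ENNReal.ofReal_sum_of_nonneg (fun k _ => Real.rpow_nonneg (norm_nonneg _) q),
    ← Fin.sum_univ_eq_sum_range (fun k => ENNReal.ofReal (‖x (c (k + 1)) - x (c k)‖ ^ q)) n]
  refine Finset.sum_congr rfl fun i _ => ?_
  have e1 : c (i : ℕ) = t i.castSucc := by
    rw [hc (i : ℕ) (by omega)]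
    exact congrArg t (Fin.ext (by simp))
  have e2 : c ((i : ℕ) + 1) = t i.succ := by
    rw [hc ((i : ℕ) + 1) (by omega)]
    exact congrArg t (Fin.ext (by simp))
  rw [e1, e2, ← ENNReal.ofReal_rpow_of_nonneg (norm_nonneg _) hq, ofReal_norm, enorm_eq_nnnorm]

theorem pVar_global_bound {V : Type*} [NormedAddCommGroup V] {p T : ℝ} (hp : 0 < p)
    {η : ℝ → V} (hfin : pVar p 0 T η < ⊤) :
    ∃ M : ℝ, 0 ≤ M ∧ ∀ (n : ℕ) (c : ℕ → ℝ), Monotone c → c 0 = 0 → c n = T →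
      ∑ k ∈ Finset.range n, ‖η (c (k + 1)) - η (c k)‖ ^ p ≤ M := by
  unfold pVar at hfin
  set S : ℝ≥0∞ := ⨆ (n : ℕ) (t : Fin (n + 1) → ℝ)
      (_ : Monotone t ∧ t 0 = 0 ∧ t (Fin.last n) = T),
    ∑ i : Fin n, (‖η (t i.succ) - η (t i.castSucc)‖₊ : ℝ≥0∞) ^ p with hS
  have hStop : S ≠ ⊤ := by
    intro hc
    rw [hc, ENNReal.top_rpow_of_pos (by positivity)] at hfin
    exact absurd hfin (lt_irrefl _)
  refine ⟨S.toReal, ENNReal.toReal_nonneg, ?_⟩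
  intro n c hcm hc0 hcn
  set w : Fin (n + 1) → ℝ := fun i => c i with hw
  have hwm : Monotone w := fun i j hij => hcm hij
  have hw0 : w 0 = 0 := hc0
  have hwl : w (Fin.last n) = T := hcn
  have hle : ∑ i : Fin n, (‖η (w i.succ) - η (w i.castSucc)‖₊ : ℝ≥0∞) ^ p ≤ S := by
    rw [hS]
    refine le_iSup_of_le n (le_iSup_of_le w (le_iSup_of_le ⟨hwm, hw0, hwl⟩ le_rfl))
  have heq := finSum_to_ofReal η w c (fun k hk => rfl) p hp.le
  rw [heq] at hle
  have := ENNReal.toReal_mono hStop hle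
  rwa [ENNReal.toReal_ofReal
    (Finset.sum_nonneg fun k _ => Real.rpow_nonneg (norm_nonneg _) p)] at this

end PVarHelpers


end YoungAux

set_option maxHeartbeats 1600000

/-- Lemma 1.2(b): under Hypothesis I, for every feasible process
`(x,u)` the function `t ↦ ψ(t, x(t))` has finite `(1/κ)`-variation (`1/κ < 2`), and
the Young integral `∫ ψ(t,x(t)) dη(t)` exists (and is finite). -/
theorem statement_4 (d : ℕ) {E : Type*} [NormedAddCommGroup E] [NormedSpace ℝ E]
    [FiniteDimensional ℝ E]
    (T : ℝ) (f : ℝ → E → E) (g : ℝ → E → (E →L[ℝ] E)) (U : Set E)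
    (φ : ℝ → E → E → ℝ) (ψ : ℝ → E → (EuclideanSpace ℝ (Fin d) →L[ℝ] ℝ))
    (ξ : E) (r κ Cψ α Cφ δ Cs Ce β γ : ℝ) (K : ℝ → ℝ)
    (hyp : HypothesisI d T f g U φ ψ ξ r κ Cψ α Cφ δ Cs Ce β γ K)
    (η : ℝ → EuclideanSpace ℝ (Fin d)) (hη : ContinuousOn η (Set.Icc 0 T))
    (hηv : ∀ p > (2 : ℝ), pVar p 0 T η < ⊤) :
    ∀ x u : ℝ → E, IsFeasible T f g U ξ x u →
      pVar (1 / κ) 0 T (fun t => ψ t (x t)) < ⊤ ∧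
      ∃ I : ℝ, HasYoungIntegral 0 T (fun t => ψ t (x t)) η I := by
  intro x u hfeas
  obtain ⟨⟨humeas, hFint, hxeq⟩, hufeas⟩ := hfeas
  have hT : 0 < T := hyp.hT
  have hκ2 : 1 / 2 < κ := hyp.hκ
  have hκ0 : 0 < κ := by linarith
  set F : ℝ → E := fun s => f s (x s) + (g s (x s)) (u s) with hF
  have hFn : IntegrableOn (fun s => ‖F s‖) (Set.Icc (0 : ℝ) T) := hFint.norm
  have hII : ∀ {s t : ℝ}, 0 ≤ s → t ≤ T → s ≤ t → IntervalIntegrable F volume s t := by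
    intro s t hs ht hst
    apply (hFint.mono_set ?_).intervalIntegrable
    rw [Set.uIcc_of_le hst]
    exact Set.Icc_subset_Icc hs ht
  have hIIn : ∀ {s t : ℝ}, 0 ≤ s → t ≤ T → s ≤ t →
      IntervalIntegrable (fun r => ‖F r‖) volume s t := by
    intro s t hs ht hst
    apply (hFn.mono_set ?_).intervalIntegrable
    rw [Set.uIcc_of_le hst]
    exact Set.Icc_subset_Icc hs ht
  set G : ℝ → ℝ := fun r => ∫ s in (0 : ℝ)..r, ‖F s‖ with hG
  have hGsub : ∀ {s t : ℝ}, 0 ≤ s → s ≤ t → t ≤ T → G t - G s = ∫ r in s..t, ‖F r‖ := by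
    intro s t hs hst ht
    exact intervalIntegral.integral_interval_sub_left (hIIn le_rfl ht (by linarith))
      (hIIn le_rfl (by linarith) hs)
  have hGmono : ∀ {s t : ℝ}, 0 ≤ s → s ≤ t → t ≤ T → G s ≤ G t := by
    intro s t hs hst ht
    have h1 : 0 ≤ ∫ r in s..t, ‖F r‖ :=
      intervalIntegral.integral_nonneg hst (fun r _ => norm_nonneg _)
    have := hGsub hs hst ht
    linarith
  have hGcont : ContinuousOn G (Set.Icc 0 T) := by
    have h1 : IntegrableOn (fun r => ‖F r‖) (Set.uIcc (0 : ℝ) T) := by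
      rwa [Set.uIcc_of_le hT.le]
    have := intervalIntegral.continuousOn_primitive_interval (μ := volume) h1
    rwa [Set.uIcc_of_le hT.le] at this
  have hxsub : ∀ {s t : ℝ}, 0 ≤ s → s ≤ t → t ≤ T → x t - x s = ∫ r in s..t, F r := by
    intro s t hs hst ht
    rw [hxeq t ⟨by linarith, ht⟩, hxeq s ⟨hs, by linarith⟩, add_sub_add_left_eq_sub]
    exact intervalIntegral.integral_interval_sub_left (hII le_rfl ht (by linarith))
      (hII le_rfl (by linarith) hs)
  have hxG : ∀ {s t : ℝ}, 0 ≤ s → s ≤ t → t ≤ T → ‖x t - x s‖ ≤ G t - G s := by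
    intro s t hs hst ht
    rw [hxsub hs hst ht, hGsub hs hst ht]
    exact intervalIntegral.norm_integral_le_integral_norm hst
  set R : ℝ := ‖ξ‖ + G T with hR
  have hG0 : G 0 = 0 := by simp [hG]
  have hGT0 : 0 ≤ G T := by
    have := hGmono le_rfl hT.le le_rfl
    rw [hG0] at this
    exact this
  have hR0 : 0 ≤ R := add_nonneg (norm_nonneg _) hGT0
  have hxR : ∀ {t : ℝ}, 0 ≤ t → t ≤ T → ‖x t‖ ≤ R := by
    intro t h1 h2
    have e0 : x 0 = ξ := by
      rw [hxeq 0 ⟨le_rfl, hT.le⟩]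
      simp
    have hd : ‖x t - x 0‖ ≤ G t - G 0 := hxG le_rfl h1 h2
    have hgt : G t ≤ G T := hGmono h1 h2 le_rfl
    calc ‖x t‖ = ‖x 0 + (x t - x 0)‖ := by rw [add_sub_cancel]
      _ ≤ ‖x 0‖ + ‖x t - x 0‖ := norm_add_le _ _
      _ ≤ ‖ξ‖ + (G t - G 0) := by
          have e0' : ‖x 0‖ = ‖ξ‖ := by rw [e0]
          linarith [hd, e0']
      _ ≤ R := by rw [hR, hG0]; linarith
  set C₁ : ℝ := max (K R) 0 with hC₁
  set X : ℝ → (EuclideanSpace ℝ (Fin d) →L[ℝ] ℝ) := fun t => ψ t (x t) with hXdef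
  have hψX : ∀ {s t : ℝ}, 0 ≤ s → s ≤ t → t ≤ T →
      ‖X t - X s‖ ≤ C₁ * ((t - s) + (G t - G s)) ^ κ := by
    intro s t hs hst ht
    have h1 := hyp.ψ_holder R hR0 s ⟨hs, by linarith⟩ t ⟨by linarith, ht⟩ (x s) (x t)
      (hxR hs (by linarith)) (hxR (by linarith) ht)
    refine h1.trans ?_
    have hbase1 : |t - s| + ‖x t - x s‖ ≤ (t - s) + (G t - G s) := by
      rw [abs_of_nonneg (by linarith)]
      have := hxG hs hst ht
      linarith
    have hb0 : (0 : ℝ) ≤ |t - s| + ‖x t - x s‖ := by positivity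
    calc K R * (|t - s| + ‖x t - x s‖) ^ κ
        ≤ C₁ * (|t - s| + ‖x t - x s‖) ^ κ :=
          mul_le_mul_of_nonneg_right (le_max_left _ _) (Real.rpow_nonneg hb0 κ)
      _ ≤ C₁ * ((t - s) + (G t - G s)) ^ κ :=
          mul_le_mul_of_nonneg_left (Real.rpow_le_rpow hb0 hbase1 hκ0.le) (le_max_right _ _)
  -- choice of exponents
  set e2 : ℝ := (max (1 - κ) 0 + 1 / 2) / 2 with he2
  have hmax0 : (0 : ℝ) ≤ max (1 - κ) 0 := le_max_right _ _
  have he2pos : 0 < e2 := by rw [he2]; linarith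
  have he2half : e2 < 1 / 2 := by
    have h1 : max (1 - κ) 0 < 1 / 2 := max_lt (by linarith) (by norm_num)
    rw [he2]; linarith
  have hκe2 : 1 < κ + e2 := by
    rcases le_or_gt κ 1 with hk1 | hk1
    · have hmx : max (1 - κ) 0 = 1 - κ := max_eq_left (by linarith)
      rw [he2, hmx]; linarith
    · have hmx : max (1 - κ) 0 = 0 := max_eq_right (by linarith)
      rw [he2, hmx]; linarith
  set p : ℝ := e2⁻¹ with hp
  have hppos : 0 < p := by rw [hp]; positivity
  have hpinv : p⁻¹ = e2 := by rw [hp, inv_inv]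
  have hp2 : 2 < p := by
    have h1 := one_div_lt_one_div_of_lt he2pos he2half
    norm_num at h1
    rw [hp]
    exact h1
  set p' : ℝ := (2 + p) / 2 with hp'
  have hp'2 : 2 < p' := by rw [hp']; linarith
  have hp'p : p' < p := by rw [hp']; linarith
  obtain ⟨Mp, hMp0, hMp⟩ := pVar_global_bound (by linarith : (0 : ℝ) < p) (hηv p hp2)
  obtain ⟨Mp', hMp'0, hMp'⟩ := pVar_global_bound (by linarith : (0 : ℝ) < p') (hηv p' hp'2)
  -- the p-variation control of η
  set ωη : ℝ → ℝ → ℝ := fun s t => sSup (ysumSet η p s t) with hωηdef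
  have hbdd : ∀ {s t : ℝ}, 0 ≤ s → s ≤ t → t ≤ T → BddAbove (ysumSet η p s t) := by
    intro s t hs hst ht
    exact ⟨Mp, fun v hv => ysumSet_le_of_global hMp hs hst ht v hv⟩
  have hωη0 : ∀ {s t : ℝ}, 0 ≤ s → s ≤ t → t ≤ T → 0 ≤ ωη s t := by
    intro s t hs hst ht
    calc (0 : ℝ) ≤ ‖η t - η s‖ ^ p := Real.rpow_nonneg (norm_nonneg _) p
      _ ≤ ωη s t := le_csSup (hbdd hs hst ht) (ysumSet_single hst)
  have hωηY : ∀ {s t : ℝ}, 0 ≤ s → s ≤ t → t ≤ T → ‖η t - η s‖ ≤ (ωη s t) ^ p⁻¹ := by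
    intro s t hs hst ht
    have h1 : ‖η t - η s‖ ^ p ≤ ωη s t := le_csSup (hbdd hs hst ht) (ysumSet_single hst)
    have h2 : (‖η t - η s‖ ^ p) ^ p⁻¹ ≤ (ωη s t) ^ p⁻¹ :=
      Real.rpow_le_rpow (Real.rpow_nonneg (norm_nonneg _) p) h1 (by positivity)
    rwa [Real.rpow_rpow_inv (norm_nonneg _) (ne_of_gt hppos)] at h2
  have hωηadd : ∀ {s u' t : ℝ}, 0 ≤ s → s ≤ u' → u' ≤ t → t ≤ T →
      ωη s u' + ωη u' t ≤ ωη s t := by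
    intro s u' t hs hsu hut ht
    have hb := hbdd hs (hsu.trans hut) ht
    have hne1 := ysumSet_nonempty η p hsu
    have hne2 := ysumSet_nonempty η p hut
    have step : ∀ v₁ ∈ ysumSet η p s u', ∀ v₂ ∈ ysumSet η p u' t, v₁ + v₂ ≤ ωη s t :=
      fun v₁ h1 v₂ h2 => le_csSup hb (ysumSet_concat h1 h2)
    have h1 : sSup (ysumSet η p u' t) ≤ ωη s t - sSup (ysumSet η p s u') := by
      refine csSup_le hne2 fun v₂ h2 => ?_
      have h3 : sSup (ysumSet η p s u') ≤ ωη s t - v₂ :=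
        csSup_le hne1 fun v₁ hv₁ => by linarith [step v₁ hv₁ v₂ h2]
      linarith
    have e1 : ωη s u' = sSup (ysumSet η p s u') := rfl
    have e2 : ωη u' t = sSup (ysumSet η p u' t) := rfl
    linarith [h1, e1, e2]
  -- smallness of ωη
  have hηuc := isCompact_Icc.uniformContinuousOn_of_continuous hη
  have hωηsmall : ∀ ε > (0 : ℝ), ∃ δ > (0 : ℝ), ∀ s t : ℝ, 0 ≤ s → s ≤ t → t ≤ T →
      t - s < δ → ωη s t < ε := by
    intro ε hε
    have hpp' : 0 < p - p' := by linarith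
    have hq : 0 < ε / (2 * (Mp' + 1)) := by positivity
    set ε₂ : ℝ := min 1 ((ε / (2 * (Mp' + 1))) ^ (p - p')⁻¹) with hε₂def
    have hε₂pos : 0 < ε₂ := lt_min one_pos (by positivity)
    have hε₂0 : 0 ≤ ε₂ := hε₂pos.le
    obtain ⟨δ, hδpos, hδ⟩ := Metric.uniformContinuousOn_iff.mp hηuc ε₂ hε₂pos
    refine ⟨δ, hδpos, ?_⟩
    intro s t hs hst ht hd
    have hub : ∀ v ∈ ysumSet η p s t, v ≤ ε / 2 := by
      rintro v ⟨n, c, hcm, hc0, hcn, rfl⟩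
      have hck : ∀ k, k ≤ n → c k ∈ Set.Icc (0 : ℝ) T := by
        intro k hk
        constructor
        · calc (0 : ℝ) ≤ s := hs
            _ = c 0 := hc0.symm
            _ ≤ c k := hcm (Nat.zero_le k)
        · calc c k ≤ c n := hcm hk
            _ = t := hcn
            _ ≤ T := ht
      have hterm : ∀ k < n, ‖η (c (k + 1)) - η (c k)‖ ^ p
          ≤ (ε / (2 * (Mp' + 1))) * ‖η (c (k + 1)) - η (c k)‖ ^ p' := by
        intro k hk
        have hnn : (0 : ℝ) ≤ ‖η (c (k + 1)) - η (c k)‖ := norm_nonneg _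
        have hsplit : ‖η (c (k + 1)) - η (c k)‖ ^ ((p - p') + p')
            = ‖η (c (k + 1)) - η (c k)‖ ^ (p - p') * ‖η (c (k + 1)) - η (c k)‖ ^ p' :=
          Real.rpow_add' hnn (by intro hc; linarith)
        rw [show (p - p') + p' = p by ring] at hsplit
        have hdist : ‖η (c (k + 1)) - η (c k)‖ < ε₂ := by
          have hdle : dist (c (k + 1)) (c k) < δ := by
            rw [Real.dist_eq, abs_of_nonneg (by linarith [hcm (Nat.le_succ k)])]
            have h1 : c (k + 1) ≤ t := hcn ▸ hcm (by omega)
            have h2 : s ≤ c k := hc0 ▸ hcm (Nat.zero_le k)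
            linarith
          have h1 := hδ (c (k + 1)) (hck (k + 1) (by omega)) (c k) (hck k (by omega)) hdle
          rwa [dist_eq_norm] at h1
        have hfac : ‖η (c (k + 1)) - η (c k)‖ ^ (p - p') ≤ ε / (2 * (Mp' + 1)) := by
          calc ‖η (c (k + 1)) - η (c k)‖ ^ (p - p') ≤ ε₂ ^ (p - p') :=
              Real.rpow_le_rpow hnn hdist.le hpp'.le
            _ ≤ ((ε / (2 * (Mp' + 1))) ^ (p - p')⁻¹) ^ (p - p') :=
              Real.rpow_le_rpow hε₂0 (min_le_right _ _) hpp'.le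
            _ = ε / (2 * (Mp' + 1)) := Real.rpow_inv_rpow hq.le (ne_of_gt hpp')
        rw [hsplit]
        exact mul_le_mul_of_nonneg_right hfac (Real.rpow_nonneg hnn p')
      have hsum' : ∑ k ∈ Finset.range n, ‖η (c (k + 1)) - η (c k)‖ ^ p' ≤ Mp' :=
        ysumSet_le_of_global hMp' hs hst ht _ ⟨n, c, hcm, hc0, hcn, rfl⟩
      calc ∑ k ∈ Finset.range n, ‖η (c (k + 1)) - η (c k)‖ ^ p
          ≤ ∑ k ∈ Finset.range n, (ε / (2 * (Mp' + 1))) * ‖η (c (k + 1)) - η (c k)‖ ^ p' :=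
            Finset.sum_le_sum fun k hk => hterm k (Finset.mem_range.mp hk)
        _ = (ε / (2 * (Mp' + 1))) * ∑ k ∈ Finset.range n, ‖η (c (k + 1)) - η (c k)‖ ^ p' :=
            (Finset.mul_sum _ _ _).symm
        _ ≤ (ε / (2 * (Mp' + 1))) * Mp' := mul_le_mul_of_nonneg_left hsum' hq.le
        _ ≤ ε / 2 := by
            rw [div_mul_eq_mul_div, div_le_div_iff₀ (by positivity) (by norm_num)]
            nlinarith
    calc ωη s t ≤ ε / 2 := csSup_le (ysumSet_nonempty η p hst) hub
      _ < ε := by linarith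
  -- the control function
  set ω : ℝ → ℝ → ℝ := fun s t => (t - s) + (G t - G s) + ωη s t with hωdef
  have hsetup : YoungSetup X η 0 T ω C₁ 1 κ p⁻¹ := by
    refine ⟨hT.le, le_max_right _ _, zero_le_one, hκ0, by rw [hpinv]; exact he2pos,
      by rw [hpinv]; exact hκe2, ?_, ?_, ?_, ?_⟩
    · intro s t hs hst ht
      have h1 := hGmono hs hst ht
      have h2 := hωη0 hs hst ht
      simp only [hωdef]
      linarith
    · intro s u' t hs hsu hut ht
      have h1 := hωηadd hs hsu hut ht
      simp only [hωdef]
      linarith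
    · intro s t hs hst ht
      refine (hψX hs hst ht).trans ?_
      have hωη0' := hωη0 hs hst ht
      have hGm := hGmono hs hst ht
      have hbase : (t - s) + (G t - G s) ≤ ω s t := by simp only [hωdef]; linarith
      exact mul_le_mul_of_nonneg_left
        (Real.rpow_le_rpow (by linarith) hbase hκ0.le) (le_max_right _ _)
    · intro s t hs hst ht
      rw [one_mul]
      refine (hωηY hs hst ht).trans ?_
      refine Real.rpow_le_rpow (hωη0 hs hst ht) ?_ (by rw [hpinv]; exact he2pos.le)
      have hGm := hGmono hs hst ht
      simp only [hωdef]
      linarith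
  -- uniform smallness of ω
  have hGuc := isCompact_Icc.uniformContinuousOn_of_continuous hGcont
  have hsmall : ∀ ε > (0 : ℝ), ∃ δ > (0 : ℝ), ∀ s t : ℝ,
      0 ≤ s → s ≤ t → t ≤ T → t - s < δ → ω s t < ε := by
    intro ε hε
    obtain ⟨δ₂, hδ₂pos, hδ₂⟩ := Metric.uniformContinuousOn_iff.mp hGuc (ε / 3) (by linarith)
    obtain ⟨δ₃, hδ₃pos, hδ₃⟩ := hωηsmall (ε / 3) (by linarith)
    refine ⟨min (ε / 3) (min δ₂ δ₃), by positivity, ?_⟩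
    intro s t hs hst ht hd
    have hd1 : t - s < ε / 3 := lt_of_lt_of_le hd (min_le_left _ _)
    have hd2 : t - s < δ₂ := lt_of_lt_of_le hd ((min_le_right _ _).trans (min_le_left _ _))
    have hd3 : t - s < δ₃ := lt_of_lt_of_le hd ((min_le_right _ _).trans (min_le_right _ _))
    have h2 : G t - G s < ε / 3 := by
      have hdist := hδ₂ t ⟨by linarith, ht⟩ s ⟨hs, by linarith⟩
        (by rw [Real.dist_eq, abs_of_nonneg (by linarith)]; exact hd2)
      rw [Real.dist_eq] at hdist
      have habs := le_abs_self (G t - G s)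
      linarith
    have h3 := hδ₃ s t hs hst ht hd3
    simp only [hωdef]
    linarith
  -- conversion Fin → ℕ machinery
  have htN_facts : ∀ (n : ℕ) (t : Fin (n + 1) → ℝ), Monotone t → t 0 = 0 →
      t (Fin.last n) = T →
      Monotone (fun k => t ⟨min k n, by omega⟩) ∧ (fun k => t ⟨min k n, by omega⟩) 0 = 0 ∧
      (fun k => t ⟨min k n, by omega⟩) n = T ∧
      (∀ k, ∀ hk : k ≤ n, (fun k => t ⟨min k n, by omega⟩) k = t ⟨k, by omega⟩) := by
    intro n t htm ht0 htl
    refine ⟨?_, ?_, ?_, ?_⟩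
    · intro k l hkl
      exact htm (by simp only [Fin.mk_le_mk]; exact min_le_min_right n hkl)
    · show t ⟨min 0 n, by omega⟩ = 0
      have he : (⟨min 0 n, by omega⟩ : Fin (n + 1)) = 0 := by
        apply Fin.ext; simp
      rw [he, ht0]
    · show t ⟨min n n, by omega⟩ = T
      have he : (⟨min n n, by omega⟩ : Fin (n + 1)) = Fin.last n := by
        apply Fin.ext; simp [Fin.last]
      rw [he, htl]
    · intro k hk
      exact congrArg t (Fin.ext (by simp [min_eq_left hk]))
  constructor
  · -- finite (1/κ)-variation of ψ(t, x(t))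
    unfold pVar
    have hSb : (⨆ (n : ℕ) (t : Fin (n + 1) → ℝ)
        (_ : Monotone t ∧ t 0 = 0 ∧ t (Fin.last n) = T),
        ∑ i : Fin n, (‖X (t i.succ) - X (t i.castSucc)‖₊ : ℝ≥0∞) ^ (1 / κ))
        ≤ ENNReal.ofReal (C₁ ^ (1 / κ) * ω 0 T) := by
      refine iSup_le fun n => iSup_le fun t => iSup_le fun hc => ?_
      obtain ⟨htm, ht0, htl⟩ := hc
      obtain ⟨hNm, hN0, hNl, hNk⟩ := htN_facts n t htm ht0 htl
      set tN : ℕ → ℝ := fun k => t ⟨min k n, by omega⟩ with htNdef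
      have hreal : ∑ k ∈ Finset.range n, ‖X (tN (k + 1)) - X (tN k)‖ ^ (1 / κ)
          ≤ C₁ ^ (1 / κ) * ω 0 T := by
        have hterm : ∀ k < n, ‖X (tN (k + 1)) - X (tN k)‖ ^ (1 / κ)
            ≤ C₁ ^ (1 / κ) * ω (tN k) (tN (k + 1)) := by
          intro k hk
          have hd1 : 0 ≤ tN k := hN0 ▸ hNm (Nat.zero_le k)
          have hd2 : tN k ≤ tN (k + 1) := hNm (Nat.le_succ k)
          have hd3 : tN (k + 1) ≤ T := hNl ▸ hNm (by omega : k + 1 ≤ n)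
          have hω0' : 0 ≤ ω (tN k) (tN (k + 1)) := hsetup.hω0 _ _ hd1 hd2 hd3
          have h1 : ‖X (tN (k + 1)) - X (tN k)‖ ≤ C₁ * ω (tN k) (tN (k + 1)) ^ κ :=
            hsetup.hX _ _ hd1 hd2 hd3
          have h2 : ‖X (tN (k + 1)) - X (tN k)‖ ^ (1 / κ)
              ≤ (C₁ * ω (tN k) (tN (k + 1)) ^ κ) ^ (1 / κ) :=
            Real.rpow_le_rpow (norm_nonneg _) h1 (by positivity)
          have h3 : (C₁ * ω (tN k) (tN (k + 1)) ^ κ) ^ (1 / κ)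
              = C₁ ^ (1 / κ) * ω (tN k) (tN (k + 1)) := by
            rw [Real.mul_rpow (le_max_right _ _) (Real.rpow_nonneg hω0' κ),
              ← Real.rpow_mul hω0', mul_one_div_cancel (ne_of_gt hκ0), Real.rpow_one]
          rw [h3] at h2
          exact h2
        calc ∑ k ∈ Finset.range n, ‖X (tN (k + 1)) - X (tN k)‖ ^ (1 / κ)
            ≤ ∑ k ∈ Finset.range n, C₁ ^ (1 / κ) * ω (tN k) (tN (k + 1)) :=
              Finset.sum_le_sum fun k hk => hterm k (Finset.mem_range.mp hk)
          _ = C₁ ^ (1 / κ) * ∑ k ∈ Finset.range n, ω (tN k) (tN (k + 1)) :=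
              (Finset.mul_sum _ _ _).symm
          _ ≤ C₁ ^ (1 / κ) * ω (tN 0) (tN n) :=
              mul_le_mul_of_nonneg_left
                (hsetup.chain_sum hNm (le_of_eq hN0.symm) n (le_of_eq hNl))
                (Real.rpow_nonneg (le_max_right _ _) _)
          _ = C₁ ^ (1 / κ) * ω 0 T := by rw [hN0, hNl]
      have hNk' : ∀ k, ∀ hk : k ≤ n, tN k = t ⟨k, by omega⟩ := fun k hk => hNk k hk
      have heq := finSum_to_ofReal X t tN hNk' (1 / κ) (by positivity)
      rw [heq]
      exact ENNReal.ofReal_le_ofReal hreal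
    have hfin : (⨆ (n : ℕ) (t : Fin (n + 1) → ℝ)
        (_ : Monotone t ∧ t 0 = 0 ∧ t (Fin.last n) = T),
        ∑ i : Fin n, (‖X (t i.succ) - X (t i.castSucc)‖₊ : ℝ≥0∞) ^ (1 / κ)) ≠ ⊤ :=
      ne_top_of_le_ne_top ENNReal.ofReal_ne_top hSb
    exact ENNReal.rpow_lt_top_of_nonneg (by positivity) hfin
  · -- existence of the Young integral
    obtain ⟨I, hI⟩ := hsetup.exists_young_limit hT hsmall
    refine ⟨I, ?_⟩
    intro ε hε
    obtain ⟨δ, hδpos, hδ⟩ := hI ε hε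
    refine ⟨δ, hδpos, ?_⟩
    intro n t τ htm ht0 htl hτ hmesh
    rcases Nat.eq_zero_or_pos n with rfl | hn
    · exfalso
      have h0T : (0 : ℝ) = T := by
        rw [← ht0, ← htl]
        rfl
      linarith
    · obtain ⟨hNm, hN0, hNl, hNk⟩ := htN_facts n t htm ht0 htl
      set tN : ℕ → ℝ := fun k => t ⟨min k n, by omega⟩ with htNdef
      set τN : ℕ → ℝ := fun k => τ ⟨min k (n - 1), by omega⟩ with hτNdef
      have hNk' : ∀ k, ∀ hk : k ≤ n, tN k = t ⟨k, by omega⟩ := fun k hk => hNk k hk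
      have hfin : ∀ i : ℕ, ∀ hi : i < n,
          τN i = τ ⟨i, hi⟩ ∧ tN i = t (⟨i, hi⟩ : Fin n).castSucc ∧
          tN (i + 1) = t (⟨i, hi⟩ : Fin n).succ := by
        intro i hi
        refine ⟨?_, ?_, ?_⟩
        · exact congrArg τ (Fin.ext (by simp only; omega))
        · rw [hNk' i (by omega)]
          exact congrArg t (Fin.ext (by simp [Fin.castSucc]))
        · rw [hNk' (i + 1) (by omega)]
          exact congrArg t (Fin.ext (by simp [Fin.succ]))
      have hτmem : ∀ i < n, τN i ∈ Set.Icc (tN i) (tN (i + 1)) := by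
        intro i hi
        obtain ⟨e1, e2, e3⟩ := hfin i hi
        rw [e1, e2, e3]
        exact hτ ⟨i, hi⟩
      have hmeshN : ∀ i < n, tN (i + 1) - tN i < δ := by
        intro i hi
        obtain ⟨e1, e2, e3⟩ := hfin i hi
        rw [e2, e3]
        exact hmesh ⟨i, hi⟩
      have hsum : ∑ i : Fin n, (ψ (τ i) (x (τ i))) (η (t i.succ) - η (t i.castSucc))
          = ytsum X η tN τN n := by
        rw [ytsum, ← Fin.sum_univ_eq_sum_range
          (fun k => X (τN k) (η (tN (k + 1)) - η (tN k))) n]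
        refine Finset.sum_congr rfl fun i _ => ?_
        obtain ⟨e1, e2, e3⟩ := hfin (i : ℕ) i.isLt
        have hieq : (⟨(i : ℕ), i.isLt⟩ : Fin n) = i := Fin.ext rfl
        rw [e1, e2, e3, hieq]
      rw [hsum]
      exact hδ n tN τN hNm hN0 hNl hτmem hmeshN
end

section
/- Let T > 0, E a finite-dimensional normed real vector space with dual E', M : [0,T] → L(E,E) measurable with t ↦ |M(t)| (operator norm) integrable, and F : [0,T] → E' continuous with Var_q(F) < ∞ for some q ≥ 1. Then the integral equation λ(t) = ∫_t^T λ(s) M(s) ds + F(t), t ∈ [0,T], has a unique continuous solution λ : [0,T] → E', and λ has finite q-variation: Var_q(λ) < ∞. -/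
open Set MeasureTheory Filter
open scoped ENNReal NNReal Topology

noncomputable section
attribute [local instance] Classical.propDecidable

end



/-- Elementary inequality used in the Riemann-sum estimate. -/
lemma stmt9_pow_ineq (n : ℕ) {a b ε : ℝ} (hb : 0 ≤ b) (hba : b ≤ a) (hε : a - b ≤ ε) :
    (a - b) * a ^ n ≤ (a ^ (n + 1) - b ^ (n + 1)) / ((n : ℝ) + 1) + ε * (a ^ n - b ^ n) := by
  have hpos : (0 : ℝ) < (n : ℝ) + 1 := by positivity
  have hmono : b ^ n ≤ a ^ n := pow_le_pow_left₀ hb hba n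
  have hgeom : ((n : ℝ) + 1) * b ^ n * (a - b) ≤ a ^ (n + 1) - b ^ (n + 1) := by
    rw [← geom_sum₂_mul]
    refine mul_le_mul_of_nonneg_right ?_ (by linarith)
    calc ((n : ℝ) + 1) * b ^ n = ∑ _i ∈ Finset.range (n + 1), b ^ n := by
          rw [Finset.sum_const, Finset.card_range]; push_cast; ring
      _ ≤ ∑ i ∈ Finset.range (n + 1), a ^ i * b ^ (n + 1 - 1 - i) := by
          refine Finset.sum_le_sum fun i hi => ?_
          have hi' : i ≤ n := Nat.lt_succ_iff.mp (Finset.mem_range.mp hi)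
          have hbn : b ^ n = b ^ i * b ^ (n + 1 - 1 - i) := by
            rw [← pow_add]; congr 1; omega
          rw [hbn]
          exact mul_le_mul_of_nonneg_right (pow_le_pow_left₀ hb hba i) (pow_nonneg hb _)
  have h2 : (a - b) * (a ^ n - b ^ n) ≤ ε * (a ^ n - b ^ n) :=
    mul_le_mul_of_nonneg_right hε (by linarith)
  have h3 : ((n : ℝ) + 1) * ((a - b) * (a ^ n - b ^ n)) ≤ ((n : ℝ) + 1) * (ε * (a ^ n - b ^ n)) :=
    mul_le_mul_of_nonneg_left h2 hpos.le
  rw [div_add' _ _ _ hpos.ne', le_div_iff₀ hpos]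
  rw [pow_succ a n, pow_succ b n] at hgeom ⊢
  nlinarith [hgeom, h3]

/-- Key integral inequality: `∫_t^T ρ(s) h(s)^n ds ≤ h(t)^{n+1}/(n+1)` where
`h(s) = ∫_s^T ρ`. -/
lemma stmt9_key {ρ : ℝ → ℝ} (hρi : Integrable ρ) (hρ0 : ∀ s, 0 ≤ ρ s) (T : ℝ) (n : ℕ)
    {t : ℝ} (ht : t ≤ T) :
    (∫ s in t..T, ρ s * (∫ u in s..T, ρ u) ^ n)
      ≤ (∫ u in t..T, ρ u) ^ (n + 1) / ((n : ℝ) + 1) := by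
  set h : ℝ → ℝ := fun s => ∫ u in s..T, ρ u with hhdef
  have hIi : ∀ a b : ℝ, IntervalIntegrable ρ volume a b := fun a b => hρi.intervalIntegrable
  have hcont : Continuous h := by
    have h1 : Continuous fun s : ℝ => ∫ u in T..s, ρ u :=
      intervalIntegral.continuous_primitive hIi T
    have h3 : h = fun s : ℝ => -∫ u in T..s, ρ u :=
      funext fun s => intervalIntegral.integral_symm T s
    rw [h3]; exact h1.neg
  have h_adj : ∀ a b : ℝ, (∫ u in a..b, ρ u) + h b = h a := fun a b =>
    intervalIntegral.integral_add_adjacent_intervals (hIi a b) (hIi b T)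
  have hanti : Antitone h := fun a b hab => by
    have h1 : 0 ≤ ∫ u in a..b, ρ u := intervalIntegral.integral_nonneg hab fun u _ => hρ0 u
    have h2 := h_adj a b; linarith
  have h_nonneg : ∀ s : ℝ, s ≤ T → 0 ≤ h s := fun s hs =>
    intervalIntegral.integral_nonneg hs fun u _ => hρ0 u
  have hT0 : h T = 0 := by simp [hhdef]
  -- integrability of `ρ * h ^ n`
  have hhbd : ∀ s, ‖h s ^ n‖ ≤ (∫ x, ‖ρ x‖) ^ n := by
    intro s
    rw [norm_pow]
    refine pow_le_pow_left₀ (norm_nonneg _) ?_ n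
    calc ‖h s‖ ≤ ∫ u in Set.uIoc s T, ‖ρ u‖ := intervalIntegral.norm_integral_le_integral_norm_uIoc
      _ ≤ ∫ u, ‖ρ u‖ := setIntegral_le_integral hρi.norm (ae_of_all _ fun u => norm_nonneg _)
  have hIrhn : Integrable (fun s => ρ s * h s ^ n) := by
    have := hρi.bdd_mul (hcont.pow n).aestronglyMeasurable (ae_of_all _ hhbd)
    exact this.congr (ae_of_all _ fun s => mul_comm _ _)
  -- ε-argument
  refine le_of_forall_pos_le_add fun ε hε => ?_
  set ε' : ℝ := ε / (h t ^ n + 1) with hε'def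
  have hht : 0 ≤ h t := h_nonneg t ht
  have hε'pos : 0 < ε' := div_pos hε (by positivity)
  -- uniform continuity of h on [t, T]
  obtain ⟨δ, hδpos, hδ⟩ := Metric.uniformContinuousOn_iff.mp
    (isCompact_Icc.uniformContinuousOn_of_continuous (s := Icc t T) hcont.continuousOn)
    ε' hε'pos
  obtain ⟨N, hN⟩ := exists_nat_gt ((T - t) / δ)
  have hNpos : 0 < (N : ℝ) := lt_of_le_of_lt (div_nonneg (by linarith) hδpos.le) hN
  set a : ℕ → ℝ := fun i => t + i * ((T - t) / N) with hadef
  have hstep0 : 0 ≤ (T - t) / N := div_nonneg (by linarith) hNpos.le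
  have hstepδ : (T - t) / N < δ := by
    rw [div_lt_iff₀ hNpos]
    have h1 := mul_lt_mul_of_pos_right hN hδpos
    rw [div_mul_cancel₀ _ hδpos.ne'] at h1
    linarith
  have hamono : Monotone a := fun i j hij => by
    simp only [hadef, add_le_add_iff_left]
    exact mul_le_mul_of_nonneg_right (by exact_mod_cast hij) hstep0
  have ha0 : a 0 = t := by simp [hadef]
  have haN : a N = T := by
    simp only [hadef]; field_simp; ring
  have hamem : ∀ i : ℕ, i ≤ N → a i ∈ Icc t T := by
    intro i hi
    constructor
    · rw [← ha0]; exact hamono (Nat.zero_le i)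
    · rw [← haN]; exact hamono hi
  have hgap : ∀ i : ℕ, a (i + 1) - a i = (T - t) / N := by
    intro i; simp only [hadef]; push_cast; ring
  -- decompose the integral
  have hdecomp : (∫ s in t..T, ρ s * h s ^ n)
      = ∑ k ∈ Finset.range N, ∫ s in a k..a (k + 1), ρ s * h s ^ n := by
    rw [intervalIntegral.sum_integral_adjacent_intervals fun k _ => hIrhn.intervalIntegrable]
    rw [ha0, haN]
  have hNnat : N ≠ 0 := by exact_mod_cast hNpos.ne'
  -- per-piece bound
  have hpiece : ∀ k, k < N → (∫ s in a k..a (k + 1), ρ s * h s ^ n)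
      ≤ (h (a k) - h (a (k + 1))) * h (a k) ^ n := by
    intro k hk
    have hle : a k ≤ a (k + 1) := hamono (Nat.le_succ k)
    have hksub : Icc (a k) (a (k + 1)) ⊆ Icc t T :=
      Icc_subset_Icc (hamem k hk.le).1 (hamem (k + 1) hk).2
    calc (∫ s in a k..a (k + 1), ρ s * h s ^ n)
        ≤ ∫ s in a k..a (k + 1), ρ s * h (a k) ^ n := by
          refine intervalIntegral.integral_mono_on hle hIrhn.intervalIntegrable
            ((hρi.mul_const _).intervalIntegrable) fun x hx => ?_
          refine mul_le_mul_of_nonneg_left ?_ (hρ0 x)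
          exact pow_le_pow_left₀ (h_nonneg x (hksub hx).2) (hanti hx.1) n
      _ = (h (a k) - h (a (k + 1))) * h (a k) ^ n := by
          rw [intervalIntegral.integral_mul_const]
          congr 1
          have := h_adj (a k) (a (k + 1)); linarith
  -- per-piece oscillation
  have hosc : ∀ k, k < N → h (a k) - h (a (k + 1)) ≤ ε' := by
    intro k hk
    have hd : dist (a k) (a (k + 1)) < δ := by
      rw [Real.dist_eq, abs_sub_comm,
        abs_of_nonneg (sub_nonneg.mpr (hamono (Nat.le_succ k))), hgap k]
      exact hstepδ
    have h1 := hδ (a k) (hamem k hk.le) (a (k + 1)) (hamem (k + 1) hk) hd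
    rw [Real.dist_eq] at h1
    calc h (a k) - h (a (k + 1)) ≤ |h (a k) - h (a (k + 1))| := le_abs_self _
      _ ≤ ε' := h1.le
  -- combine
  have hsum : (∫ s in t..T, ρ s * h s ^ n)
      ≤ (h (a 0) ^ (n + 1) - h (a N) ^ (n + 1)) / ((n : ℝ) + 1)
        + ε' * (h (a 0) ^ n - h (a N) ^ n) := by
    rw [hdecomp]
    calc ∑ k ∈ Finset.range N, ∫ s in a k..a (k + 1), ρ s * h s ^ n
        ≤ ∑ k ∈ Finset.range N, ((h (a k) ^ (n + 1) - h (a (k + 1)) ^ (n + 1)) / ((n : ℝ) + 1)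
            + ε' * (h (a k) ^ n - h (a (k + 1)) ^ n)) := by
          refine Finset.sum_le_sum fun k hk => ?_
          have hk' := Finset.mem_range.mp hk
          refine (hpiece k hk').trans ?_
          exact stmt9_pow_ineq n (h_nonneg _ (hamem (k + 1) hk').2)
            (hanti (hamono (Nat.le_succ k))) (hosc k hk')
      _ = (h (a 0) ^ (n + 1) - h (a N) ^ (n + 1)) / ((n : ℝ) + 1)
            + ε' * (h (a 0) ^ n - h (a N) ^ n) := by
          rw [Finset.sum_add_distrib, ← Finset.sum_div, ← Finset.mul_sum]
          rw [Finset.sum_range_sub' fun k => h (a k) ^ (n + 1),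
            Finset.sum_range_sub' fun k => h (a k) ^ n]
  rw [ha0, haN, hT0] at hsum
  have hzpow : (0:ℝ) ^ (n + 1) = 0 := by simp
  have hε'bound : ε' * (h t ^ n - 0 ^ n) ≤ ε := by
    have h0n : (0:ℝ) ≤ (0:ℝ) ^ n := pow_nonneg le_rfl n
    calc ε' * (h t ^ n - 0 ^ n) ≤ ε' * (h t ^ n + 1) := by
          refine mul_le_mul_of_nonneg_left (by linarith) hε'pos.le
      _ = ε := by rw [hε'def]; field_simp
  calc (∫ s in t..T, ρ s * h s ^ n)
      ≤ (h t ^ (n + 1) - 0 ^ (n + 1)) / ((n : ℝ) + 1) + ε' * (h t ^ n - 0 ^ n) := hsum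
    _ ≤ h t ^ (n + 1) / ((n : ℝ) + 1) + ε := by
        rw [hzpow, sub_zero]; linarith

set_option maxHeartbeats 1000000 in
set_option synthInstance.maxHeartbeats 400000 in
/-- Lemma 3.2, well-posedness of the costate equation: if
`t ↦ ‖M(t)‖` is integrable and `F` is continuous with finite `q`-variation, then the
equation `λ(t) = ∫_t^T λ(s) M(s) ds + F(t)` has a unique continuous solution on
`[0,T]`, which moreover has finite `q`-variation. -/
theorem statement_9 {E : Type*} [NormedAddCommGroup E] [NormedSpace ℝ E]
    [FiniteDimensional ℝ E]
    (T q : ℝ) (hT : 0 < T) (hq : 1 ≤ q)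
    (M : ℝ → (E →L[ℝ] E))
    (hM : AEStronglyMeasurable M (volume.restrict (Set.Icc (0 : ℝ) T)))
    (hMi : IntegrableOn (fun t => ‖M t‖) (Set.Icc (0 : ℝ) T))
    (F : ℝ → (E →L[ℝ] ℝ)) (hF : ContinuousOn F (Set.Icc 0 T))
    (hFv : pVar q 0 T F < ⊤) :
    ∃ lam : ℝ → (E →L[ℝ] ℝ),
      (ContinuousOn lam (Set.Icc 0 T) ∧
        (∀ t ∈ Set.Icc (0 : ℝ) T, lam t = (∫ s in t..T, (lam s).comp (M s)) + F t) ∧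
        pVar q 0 T lam < ⊤) ∧
      ∀ lam' : ℝ → (E →L[ℝ] ℝ), ContinuousOn lam' (Set.Icc 0 T) →
        (∀ t ∈ Set.Icc (0 : ℝ) T, lam' t = (∫ s in t..T, (lam' s).comp (M s)) + F t) →
        Set.EqOn lam' lam (Set.Icc 0 T) := by
  classical
  have hT' : (0:ℝ) ≤ T := hT.le
  set M' : ℝ → (E →L[ℝ] E) := (Set.Icc (0:ℝ) T).indicator M with hM'def
  have hM'meas : AEStronglyMeasurable M' volume :=
    (aestronglyMeasurable_indicator_iff measurableSet_Icc).mpr hM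
  have hM'eq : ∀ s ∈ Set.Icc (0:ℝ) T, M' s = M s := fun s hs => Set.indicator_of_mem hs M
  set ρ : ℝ → ℝ := fun s => ‖M' s‖ with hρdef
  have hρ0 : ∀ s, 0 ≤ ρ s := fun s => norm_nonneg _
  have hρi : Integrable ρ := by
    have hρeq : ρ = (Set.Icc (0:ℝ) T).indicator (fun s => ‖M s‖) := by
      funext s
      by_cases hs : s ∈ Set.Icc (0:ℝ) T
      · simp [hρdef, hM'def, Set.indicator_of_mem hs]
      · simp [hρdef, hM'def, Set.indicator_of_notMem hs]
    rw [hρeq]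
    exact (integrable_indicator_iff measurableSet_Icc).mpr hMi
  set h : ℝ → ℝ := fun s => ∫ u in s..T, ρ u with hhdef
  have hIiρ : ∀ a b : ℝ, IntervalIntegrable ρ volume a b := fun a b => hρi.intervalIntegrable
  have hcont_h : Continuous h := by
    have h1 : Continuous fun s : ℝ => ∫ u in T..s, ρ u :=
      intervalIntegral.continuous_primitive hIiρ T
    have h3 : h = fun s : ℝ => -∫ u in T..s, ρ u :=
      funext fun s => intervalIntegral.integral_symm T s
    rw [h3]; exact h1.neg
  have h_adj : ∀ a b : ℝ, (∫ u in a..b, ρ u) + h b = h a := fun a b =>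
    intervalIntegral.integral_add_adjacent_intervals (hIiρ a b) (hIiρ b T)
  have hanti : Antitone h := fun a b hab => by
    have h1 : 0 ≤ ∫ u in a..b, ρ u := intervalIntegral.integral_nonneg hab fun u _ => hρ0 u
    have h2 := h_adj a b; linarith
  have h_nonneg : ∀ s : ℝ, s ≤ T → 0 ≤ h s := fun s hs =>
    intervalIntegral.integral_nonneg hs fun u _ => hρ0 u
  -- the Banach space of continuous candidate solutions
  have extmem : ∀ (lam : C(Set.Icc (0:ℝ) T, E →L[ℝ] ℝ)) (s : ℝ) (hs : s ∈ Set.Icc (0:ℝ) T),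
      lam (Set.projIcc 0 T hT' s) = lam ⟨s, hs⟩ := fun lam s hs => by
    rw [Set.projIcc_of_mem]
  -- integrability of the integrand
  have hInteg : ∀ lam : C(Set.Icc (0:ℝ) T, E →L[ℝ] ℝ),
      Integrable (fun s => (lam (Set.projIcc 0 T hT' s)).comp (M' s)) volume := by
    intro lam
    have hcontl : Continuous fun s : ℝ => lam (Set.projIcc 0 T hT' s) :=
      lam.continuous.comp continuous_projIcc
    have hmeas : AEStronglyMeasurable
        (fun s => (lam (Set.projIcc 0 T hT' s)).comp (M' s)) volume := by
      have hbil : Continuous fun p : (E →L[ℝ] ℝ) × (E →L[ℝ] E) => p.1.comp p.2 :=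
        (isBoundedBilinearMap_comp (𝕜 := ℝ)).continuous
      exact hbil.comp_aestronglyMeasurable
        (hcontl.aestronglyMeasurable.prodMk hM'meas)
    refine (hρi.const_mul ‖lam‖).mono' hmeas (ae_of_all _ fun s => ?_)
    calc ‖(lam (Set.projIcc 0 T hT' s)).comp (M' s)‖
        ≤ ‖lam (Set.projIcc 0 T hT' s)‖ * ‖M' s‖ := ContinuousLinearMap.opNorm_comp_le _ _
      _ ≤ ‖lam‖ * ρ s :=
          mul_le_mul_of_nonneg_right (lam.norm_coe_le_norm _) (norm_nonneg _)
  -- the Picard map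
  have hΦcont : ∀ lam : C(Set.Icc (0:ℝ) T, E →L[ℝ] ℝ),
      Continuous fun tt : Set.Icc (0:ℝ) T =>
        (∫ s in (tt:ℝ)..T, (lam (Set.projIcc 0 T hT' s)).comp (M' s)) + F tt := by
    intro lam
    have h1 : Continuous fun r : ℝ =>
        ∫ s in r..T, (lam (Set.projIcc 0 T hT' s)).comp (M' s) := by
      have h2 := intervalIntegral.continuous_primitive
        (fun a b => (hInteg lam).intervalIntegrable) T
      have h3 : (fun r : ℝ => ∫ s in r..T, (lam (Set.projIcc 0 T hT' s)).comp (M' s))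
          = fun r : ℝ => -∫ s in T..r, (lam (Set.projIcc 0 T hT' s)).comp (M' s) :=
        funext fun r => intervalIntegral.integral_symm T r
      rw [h3]; exact h2.neg
    exact (h1.comp continuous_subtype_val).add hF.restrict
  set Φ : C(Set.Icc (0:ℝ) T, E →L[ℝ] ℝ) → C(Set.Icc (0:ℝ) T, E →L[ℝ] ℝ) :=
    fun lam => ⟨_, hΦcont lam⟩ with hΦdef
  have Φapp : ∀ (lam : C(Set.Icc (0:ℝ) T, E →L[ℝ] ℝ)) (tt : Set.Icc (0:ℝ) T),
      Φ lam tt = (∫ s in (tt:ℝ)..T, (lam (Set.projIcc 0 T hT' s)).comp (M' s)) + F tt :=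
    fun lam tt => rfl
  -- integrability of ρ * h^n
  have hIrhn : ∀ n : ℕ, Integrable (fun s => ρ s * h s ^ n) := by
    intro n
    have hhbd : ∀ s, ‖h s ^ n‖ ≤ (∫ x, ‖ρ x‖) ^ n := by
      intro s
      rw [norm_pow]
      refine pow_le_pow_left₀ (norm_nonneg _) ?_ n
      calc ‖h s‖ ≤ ∫ u in Set.uIoc s T, ‖ρ u‖ := intervalIntegral.norm_integral_le_integral_norm_uIoc
        _ ≤ ∫ u, ‖ρ u‖ := setIntegral_le_integral hρi.norm (ae_of_all _ fun u => norm_nonneg _)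
    have h1 := hρi.bdd_mul (hcont_h.pow n).aestronglyMeasurable (ae_of_all _ hhbd)
    exact h1.congr (ae_of_all _ fun s => mul_comm _ _)
  -- the iterate estimate
  have iterate_est : ∀ (n : ℕ) (lam₁ lam₂ : C(Set.Icc (0:ℝ) T, E →L[ℝ] ℝ))
      (tt : Set.Icc (0:ℝ) T),
      dist ((Φ^[n]) lam₁ tt) ((Φ^[n]) lam₂ tt)
        ≤ dist lam₁ lam₂ * (h tt ^ n / (n.factorial : ℝ)) := by
    intro n
    induction n with
    | zero =>
      intro lam₁ lam₂ tt
      simpa using ContinuousMap.dist_apply_le_dist (f := lam₁) (g := lam₂) tt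
    | succ n ih =>
      intro lam₁ lam₂ tt
      rw [Function.iterate_succ_apply', Function.iterate_succ_apply']
      have htt0 : (0:ℝ) ≤ (tt:ℝ) := tt.2.1
      have httT : (tt:ℝ) ≤ T := tt.2.2
      set D : ℝ := dist lam₁ lam₂ with hDdef
      have hD0 : 0 ≤ D := dist_nonneg
      set a := Φ^[n] lam₁ with hadef
      set b := Φ^[n] lam₂ with hbdef
      have hsub : Φ a tt - Φ b tt = ∫ s in (tt:ℝ)..T,
          ((a (Set.projIcc 0 T hT' s)).comp (M' s)
            - (b (Set.projIcc 0 T hT' s)).comp (M' s)) := by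
        rw [Φapp, Φapp,
          intervalIntegral.integral_sub (hInteg a).intervalIntegrable
            (hInteg b).intervalIntegrable]
        abel
      rw [dist_eq_norm, hsub]
      have hfact0 : (0:ℝ) < (n.factorial : ℝ) := by exact_mod_cast n.factorial_pos
      set c : ℝ := D / (n.factorial : ℝ) with hcdef
      have hc0 : 0 ≤ c := div_nonneg hD0 hfact0.le
      have hgint : IntervalIntegrable (fun s => c * (ρ s * h s ^ n)) volume (tt:ℝ) T :=
        ((hIrhn n).const_mul c).intervalIntegrable
      have hbound : ∀ᵐ s ∂(volume.restrict (Set.uIoc (tt:ℝ) T)),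
          ‖(a (Set.projIcc 0 T hT' s)).comp (M' s)
            - (b (Set.projIcc 0 T hT' s)).comp (M' s)‖ ≤ c * (ρ s * h s ^ n) := by
        filter_upwards [ae_restrict_mem measurableSet_uIoc] with s hs
        rw [Set.uIoc_of_le httT] at hs
        have hsmem : s ∈ Set.Icc (0:ℝ) T := ⟨le_of_lt (lt_of_le_of_lt htt0 hs.1), hs.2⟩
        have hpt := ih lam₁ lam₂ ⟨s, hsmem⟩
        rw [dist_eq_norm] at hpt
        calc ‖(a (Set.projIcc 0 T hT' s)).comp (M' s)
              - (b (Set.projIcc 0 T hT' s)).comp (M' s)‖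
            = ‖(a (Set.projIcc 0 T hT' s) - b (Set.projIcc 0 T hT' s)).comp (M' s)‖ := by
              rw [ContinuousLinearMap.sub_comp]
          _ ≤ ‖a (Set.projIcc 0 T hT' s) - b (Set.projIcc 0 T hT' s)‖ * ‖M' s‖ :=
              ContinuousLinearMap.opNorm_comp_le _ _
          _ ≤ (D * (h s ^ n / (n.factorial : ℝ))) * ρ s := by
              refine mul_le_mul_of_nonneg_right ?_ (norm_nonneg _)
              rw [extmem a s hsmem, extmem b s hsmem]
              exact hpt
          _ = c * (ρ s * h s ^ n) := by rw [hcdef]; ring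
      calc ‖∫ s in (tt:ℝ)..T, ((a (Set.projIcc 0 T hT' s)).comp (M' s)
              - (b (Set.projIcc 0 T hT' s)).comp (M' s))‖
          ≤ |∫ s in (tt:ℝ)..T, c * (ρ s * h s ^ n)| :=
            intervalIntegral.norm_integral_le_abs_of_norm_le hbound hgint
        _ = ∫ s in (tt:ℝ)..T, c * (ρ s * h s ^ n) := by
            refine abs_of_nonneg ?_
            refine intervalIntegral.integral_nonneg httT fun u hu => ?_
            have := h_nonneg u hu.2
            positivity
        _ = c * ∫ s in (tt:ℝ)..T, ρ s * h s ^ n := intervalIntegral.integral_const_mul _ _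
        _ ≤ c * (h tt ^ (n + 1) / ((n : ℝ) + 1)) := by
            refine mul_le_mul_of_nonneg_left ?_ hc0
            exact stmt9_key hρi hρ0 T n httT
        _ = D * (h tt ^ (n + 1) / ((n + 1).factorial : ℝ)) := by
            have hfs : (((n+1).factorial : ℕ) : ℝ) = ((n:ℝ)+1) * (n.factorial : ℝ) := by
              rw [Nat.factorial_succ]; push_cast; ring
            have hf0 : ((n.factorial : ℕ) : ℝ) ≠ 0 := by
              exact_mod_cast n.factorial_pos.ne'
            have hn1 : ((n:ℝ)+1) ≠ 0 := by positivity
            rw [hcdef, hfs]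
            field_simp
  -- contraction for a large iterate
  have hh0 : 0 ≤ h 0 := h_nonneg 0 hT'
  obtain ⟨n, hn⟩ : ∃ n : ℕ, h 0 ^ n / (n.factorial : ℝ) < 1 := by
    have := FloorSemiring.tendsto_pow_div_factorial_atTop (h 0)
    exact ((this.eventually (gt_mem_nhds one_pos)).exists)
  have hKnn : 0 ≤ h 0 ^ n / (n.factorial : ℝ) := by positivity
  set K : ℝ≥0 := ⟨h 0 ^ n / (n.factorial : ℝ), hKnn⟩ with hKdef
  have hcontr : ContractingWith K (Φ^[n]) := by
    constructor
    · exact_mod_cast hn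
    · refine LipschitzWith.of_dist_le_mul fun lam₁ lam₂ => ?_
      have hKd : (0:ℝ) ≤ (K : ℝ) * dist lam₁ lam₂ := mul_nonneg hKnn dist_nonneg
      rw [ContinuousMap.dist_le hKd]
      intro x
      have h1 := iterate_est n lam₁ lam₂ x
      have h2 : h x ^ n ≤ h 0 ^ n := pow_le_pow_left₀ (h_nonneg x x.2.2) (hanti x.2.1) n
      have hfact0 : (0:ℝ) < (n.factorial : ℝ) := by exact_mod_cast n.factorial_pos
      calc dist ((Φ^[n]) lam₁ x) ((Φ^[n]) lam₂ x)
          ≤ dist lam₁ lam₂ * (h x ^ n / (n.factorial : ℝ)) := h1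
        _ ≤ dist lam₁ lam₂ * (h 0 ^ n / (n.factorial : ℝ)) := by
            refine mul_le_mul_of_nonneg_left ?_ dist_nonneg
            gcongr
        _ = (K : ℝ) * dist lam₁ lam₂ := by
            show _ = (h 0 ^ n / (n.factorial : ℝ)) * dist lam₁ lam₂; ring
  -- fixed point
  haveI : Nonempty C(Set.Icc (0:ℝ) T, E →L[ℝ] ℝ) := ⟨0⟩
  set lamC : C(Set.Icc (0:ℝ) T, E →L[ℝ] ℝ) :=
    ContractingWith.fixedPoint (Φ^[n]) hcontr with hlamCdef
  have hfix : Function.IsFixedPt Φ lamC :=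
    ContractingWith.isFixedPt_fixedPoint_iterate hcontr
  have huniq : ∀ x, Function.IsFixedPt Φ x → x = lamC := fun x hx =>
    ContractingWith.fixedPoint_unique hcontr (hx.iterate n)
  -- the integral equation (with M')
  have heqn : ∀ t : ℝ, ∀ _ht : t ∈ Set.Icc (0:ℝ) T,
      lamC (Set.projIcc 0 T hT' t)
        = (∫ s in t..T, (lamC (Set.projIcc 0 T hT' s)).comp (M' s)) + F t := by
    intro t ht
    have h1 : lamC (Set.projIcc 0 T hT' t) = (Φ lamC) ⟨t, ht⟩ := by
      rw [extmem lamC t ht, hfix]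
    rw [h1]
    exact Φapp lamC ⟨t, ht⟩
  -- replacing M' by M in integrals over subintervals of [0, T]
  have hcongrM : ∀ (lam0 : C(Set.Icc (0:ℝ) T, E →L[ℝ] ℝ)) (t : ℝ), t ∈ Set.Icc (0:ℝ) T →
      (∫ s in t..T, (lam0 (Set.projIcc 0 T hT' s)).comp (M' s))
        = ∫ s in t..T, (lam0 (Set.projIcc 0 T hT' s)).comp (M s) := by
    intro lam0 t ht
    refine intervalIntegral.integral_congr fun s hs => ?_
    rw [Set.uIcc_of_le ht.2] at hs
    have hsmem : s ∈ Set.Icc (0:ℝ) T := ⟨le_trans ht.1 hs.1, hs.2⟩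
    rw [hM'eq s hsmem]
  refine ⟨fun t => lamC (Set.projIcc 0 T hT' t), ⟨?_, ?_, ?_⟩, ?_⟩
  · exact (lamC.continuous.comp continuous_projIcc).continuousOn
  · -- the equation
    intro t ht
    show lamC (Set.projIcc 0 T hT' t)
      = (∫ s in t..T, (lamC (Set.projIcc 0 T hT' s)).comp (M s)) + F t
    rw [heqn t ht, hcongrM lamC t ht]
  · -- finite q-variation
    have hq0 : (0:ℝ) < q := lt_of_lt_of_le one_pos hq
    set lam : ℝ → (E →L[ℝ] ℝ) := fun t => lamC (Set.projIcc 0 T hT' t) with hlamdef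
    set g : ℝ → (E →L[ℝ] ℝ) := fun s => (lam s).comp (M' s) with hgdef
    have hgi : Integrable g := hInteg lamC
    set G : ℝ → (E →L[ℝ] ℝ) := fun t => ∫ s in t..T, g s with hGdef
    have hlameq : ∀ t : ℝ, t ∈ Set.Icc (0:ℝ) T → lam t = G t + F t := fun t ht => heqn t ht
    set B : ℝ := ∫ s in (0:ℝ)..T, ‖g s‖ with hBdef
    set VF : ℝ≥0∞ := ⨆ (m : ℕ) (tt : Fin (m + 1) → ℝ)
        (_ : Monotone tt ∧ tt 0 = 0 ∧ tt (Fin.last m) = T),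
        ∑ i : Fin m, (‖F (tt i.succ) - F (tt i.castSucc)‖₊ : ℝ≥0∞) ^ q with hVFdef
    have hVFfin : VF ≠ ⊤ := by
      intro hcon
      have hFveq : pVar q 0 T F = VF ^ (1 / q) := rfl
      rw [hFveq, hcon, ENNReal.top_rpow_of_pos (by positivity)] at hFv
      exact absurd hFv (lt_irrefl _)
    have hpow2 : ∀ x y : ℝ≥0∞, (x + y) ^ q ≤ 2 ^ q * (x ^ q + y ^ q) := by
      intro x y
      have h1 : x + y ≤ 2 * max x y := by
        rcases le_total x y with hxy | hxy
        · rw [max_eq_right hxy, two_mul]; exact add_le_add hxy le_rfl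
        · rw [max_eq_left hxy, two_mul]; exact add_le_add le_rfl hxy
      calc (x + y) ^ q ≤ (2 * max x y) ^ q := ENNReal.rpow_le_rpow h1 hq0.le
        _ = 2 ^ q * (max x y) ^ q := ENNReal.mul_rpow_of_nonneg _ _ hq0.le
        _ ≤ 2 ^ q * (x ^ q + y ^ q) := by
            refine mul_le_mul_right ?_ _
            rcases le_total x y with hxy | hxy
            · rw [max_eq_right hxy]; exact le_add_self
            · rw [max_eq_left hxy]; exact self_le_add_right _ _
    have hsumpow : ∀ (m : ℕ) (f : Fin m → ℝ≥0∞), (∑ i, f i ^ q) ≤ (∑ i, f i) ^ q := by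
      intro m f
      have hq1 : (0:ℝ) ≤ q - 1 := by linarith
      calc (∑ i, f i ^ q) ≤ ∑ i, f i * (∑ j, f j) ^ (q - 1) := by
            refine Finset.sum_le_sum fun i _ => ?_
            calc f i ^ q = f i ^ (1 + (q - 1)) := by norm_num
              _ = f i ^ (1:ℝ) * f i ^ (q - 1) :=
                  ENNReal.rpow_add_of_nonneg _ _ zero_le_one hq1
              _ ≤ f i ^ (1:ℝ) * (∑ j, f j) ^ (q - 1) := by
                  refine mul_le_mul_right (ENNReal.rpow_le_rpow ?_ hq1) _
                  exact Finset.single_le_sum (fun j _ => zero_le) (Finset.mem_univ i)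
              _ = f i * (∑ j, f j) ^ (q - 1) := by rw [ENNReal.rpow_one]
        _ = (∑ i, f i) * (∑ j, f j) ^ (q - 1) := by rw [← Finset.sum_mul]
        _ = (∑ i, f i) ^ q := by
            nth_rewrite 1 [← ENNReal.rpow_one (∑ i, f i)]
            rw [← ENNReal.rpow_add_of_nonneg _ _ zero_le_one hq1]
            norm_num
    show (⨆ (m : ℕ) (tt : Fin (m + 1) → ℝ)
        (_ : Monotone tt ∧ tt 0 = 0 ∧ tt (Fin.last m) = T),
        ∑ i : Fin m, (‖lam (tt i.succ) - lam (tt i.castSucc)‖₊ : ℝ≥0∞) ^ q) ^ (1 / q) < ⊤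
    have hfin : (2:ℝ≥0∞) ^ q * ((ENNReal.ofReal B) ^ q + VF) ≠ ⊤ := by
      refine ENNReal.mul_ne_top ?_ ?_
      · exact (ENNReal.rpow_lt_top_of_nonneg hq0.le ENNReal.ofNat_ne_top).ne
      · exact ENNReal.add_ne_top.mpr
          ⟨(ENNReal.rpow_lt_top_of_nonneg hq0.le ENNReal.ofReal_ne_top).ne, hVFfin⟩
    refine ENNReal.rpow_lt_top_of_nonneg (by positivity) (ne_top_of_le_ne_top hfin ?_)
    refine iSup_le fun m => iSup_le fun t => iSup_le fun hcond => ?_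
    obtain ⟨hmono, ht0, htl⟩ := hcond
    have hmem : ∀ i : Fin (m + 1), t i ∈ Set.Icc (0:ℝ) T := fun i =>
      ⟨ht0 ▸ hmono (Fin.zero_le i), htl ▸ hmono (Fin.le_last i)⟩
    have hle : ∀ i : Fin m, t i.castSucc ≤ t i.succ := fun i =>
      hmono (show i.castSucc < i.succ from Fin.castSucc_lt_succ).le
    have hpieceeq : ∀ i : Fin m, G (t i.succ) - G (t i.castSucc)
        = -∫ s in (t i.castSucc)..(t i.succ), g s := by
      intro i
      have hadd := intervalIntegral.integral_add_adjacent_intervals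
        (a := t i.castSucc) (b := t i.succ) (c := T)
        hgi.intervalIntegrable hgi.intervalIntegrable (f := g)
      have hGs : G (t i.castSucc)
          = (∫ s in (t i.castSucc)..(t i.succ), g s) + G (t i.succ) := hadd.symm
      rw [hGs]; abel
    have hpiecebd : ∀ i : Fin m, (‖G (t i.succ) - G (t i.castSucc)‖₊ : ℝ≥0∞)
        ≤ ENNReal.ofReal (∫ s in (t i.castSucc)..(t i.succ), ‖g s‖) := by
      intro i
      rw [← ENNReal.ofReal_coe_nnreal, coe_nnnorm]
      refine ENNReal.ofReal_le_ofReal ?_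
      rw [hpieceeq i, norm_neg]
      exact intervalIntegral.norm_integral_le_integral_norm (hle i)
    have hB0 : ∀ i : Fin m, 0 ≤ ∫ s in (t i.castSucc)..(t i.succ), ‖g s‖ := fun i =>
      intervalIntegral.integral_nonneg (hle i) fun u _ => norm_nonneg _
    have hsumpieces :
        (∑ i : Fin m, ∫ s in (t i.castSucc)..(t i.succ), ‖g s‖) = B := by
      set aa : ℕ → ℝ := fun k => t ⟨min k m, Nat.lt_succ_of_le (min_le_right k m)⟩ with haadef
      have hcs : ∀ i : Fin m, t i.castSucc = aa i := by
        intro i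
        have : (⟨min (i:ℕ) m, Nat.lt_succ_of_le (min_le_right _ m)⟩ : Fin (m+1))
            = i.castSucc := Fin.ext (by simp [Nat.min_eq_left i.isLt.le])
        rw [haadef]
        simp only []
        rw [this]
      have hsc : ∀ i : Fin m, t i.succ = aa ((i:ℕ) + 1) := by
        intro i
        have : (⟨min ((i:ℕ) + 1) m, Nat.lt_succ_of_le (min_le_right _ m)⟩ : Fin (m+1))
            = i.succ := Fin.ext (by simp [Nat.min_eq_left (Nat.succ_le_of_lt i.isLt)])
        rw [haadef]
        simp only []
        rw [this]
      have haa0 : aa 0 = 0 := by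
        rw [haadef]
        simp only []
        rw [← ht0]
        congr 1
      have haam : aa m = T := by
        rw [haadef]
        simp only []
        rw [← htl]
        congr 1
        exact Fin.ext (by simp [Fin.last])
      calc (∑ i : Fin m, ∫ s in (t i.castSucc)..(t i.succ), ‖g s‖)
          = ∑ i : Fin m, (fun k : ℕ => ∫ s in (aa k)..(aa (k + 1)), ‖g s‖) (i : ℕ) := by
            refine Finset.sum_congr rfl fun i _ => ?_
            simp only []
            rw [hcs i, hsc i]
        _ = ∑ k ∈ Finset.range m, ∫ s in (aa k)..(aa (k + 1)), ‖g s‖ :=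
            Fin.sum_univ_eq_sum_range (fun k : ℕ => ∫ s in (aa k)..(aa (k + 1)), ‖g s‖) m
        _ = ∫ s in (aa 0)..(aa m), ‖g s‖ :=
            intervalIntegral.sum_integral_adjacent_intervals fun k _ =>
              hgi.norm.intervalIntegrable
        _ = B := by rw [haa0, haam]
    have hstep : ∀ i : Fin m, (‖lam (t i.succ) - lam (t i.castSucc)‖₊ : ℝ≥0∞) ^ q
        ≤ 2 ^ q * ((ENNReal.ofReal (∫ s in (t i.castSucc)..(t i.succ), ‖g s‖)) ^ q
          + (‖F (t i.succ) - F (t i.castSucc)‖₊ : ℝ≥0∞) ^ q) := by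
      intro i
      have hdiff : lam (t i.succ) - lam (t i.castSucc)
          = (G (t i.succ) - G (t i.castSucc)) + (F (t i.succ) - F (t i.castSucc)) := by
        rw [hlameq _ (hmem _), hlameq _ (hmem _)]; abel
      calc (‖lam (t i.succ) - lam (t i.castSucc)‖₊ : ℝ≥0∞) ^ q
          ≤ ((‖G (t i.succ) - G (t i.castSucc)‖₊ : ℝ≥0∞)
            + (‖F (t i.succ) - F (t i.castSucc)‖₊ : ℝ≥0∞)) ^ q := by
            refine ENNReal.rpow_le_rpow ?_ hq0.le
            rw [hdiff]
            calc (‖(G (t i.succ) - G (t i.castSucc))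
                  + (F (t i.succ) - F (t i.castSucc))‖₊ : ℝ≥0∞)
                ≤ ((‖G (t i.succ) - G (t i.castSucc)‖₊
                  + ‖F (t i.succ) - F (t i.castSucc)‖₊ : ℝ≥0) : ℝ≥0∞) :=
                  ENNReal.coe_le_coe.mpr (nnnorm_add_le _ _)
              _ = _ := ENNReal.coe_add _ _
        _ ≤ 2 ^ q * ((‖G (t i.succ) - G (t i.castSucc)‖₊ : ℝ≥0∞) ^ q
            + (‖F (t i.succ) - F (t i.castSucc)‖₊ : ℝ≥0∞) ^ q) := hpow2 _ _
        _ ≤ 2 ^ q * ((ENNReal.ofReal (∫ s in (t i.castSucc)..(t i.succ), ‖g s‖)) ^ q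
            + (‖F (t i.succ) - F (t i.castSucc)‖₊ : ℝ≥0∞) ^ q) :=
            mul_le_mul_right
              (add_le_add_left (ENNReal.rpow_le_rpow (hpiecebd i) hq0.le) _) _
    calc (∑ i : Fin m, (‖lam (t i.succ) - lam (t i.castSucc)‖₊ : ℝ≥0∞) ^ q)
        ≤ ∑ i : Fin m, 2 ^ q
            * ((ENNReal.ofReal (∫ s in (t i.castSucc)..(t i.succ), ‖g s‖)) ^ q
              + (‖F (t i.succ) - F (t i.castSucc)‖₊ : ℝ≥0∞) ^ q) :=
          Finset.sum_le_sum fun i _ => hstep i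
      _ = 2 ^ q * ((∑ i : Fin m,
            (ENNReal.ofReal (∫ s in (t i.castSucc)..(t i.succ), ‖g s‖)) ^ q)
          + ∑ i : Fin m, (‖F (t i.succ) - F (t i.castSucc)‖₊ : ℝ≥0∞) ^ q) := by
          rw [← Finset.mul_sum, Finset.sum_add_distrib]
      _ ≤ 2 ^ q * ((ENNReal.ofReal B) ^ q + VF) := by
          refine mul_le_mul_right (add_le_add ?_ ?_) _
          · calc (∑ i : Fin m,
                (ENNReal.ofReal (∫ s in (t i.castSucc)..(t i.succ), ‖g s‖)) ^ q)
                ≤ (∑ i : Fin m,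
                    ENNReal.ofReal (∫ s in (t i.castSucc)..(t i.succ), ‖g s‖)) ^ q :=
                  hsumpow m _
              _ = (ENNReal.ofReal B) ^ q := by
                  rw [← ENNReal.ofReal_sum_of_nonneg (fun i _ => hB0 i), hsumpieces]
          · exact le_iSup_of_le m (le_iSup_of_le t (le_iSup_of_le ⟨hmono, ht0, htl⟩ le_rfl))
  · -- uniqueness
    intro lam' hcont' heq' t ht
    set x' : C(Set.Icc (0:ℝ) T, E →L[ℝ] ℝ) :=
      ⟨(Set.Icc (0:ℝ) T).restrict lam', hcont'.restrict⟩ with hx'def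
    have hfx : Function.IsFixedPt Φ x' := by
      refine ContinuousMap.ext ?_
      rintro ⟨s0, hs0⟩
      have hint : (∫ s in s0..T, (x' (Set.projIcc 0 T hT' s)).comp (M' s))
          = ∫ s in s0..T, (lam' s).comp (M s) := by
        refine intervalIntegral.integral_congr fun s hs => ?_
        rw [Set.uIcc_of_le hs0.2] at hs
        have hsmem : s ∈ Set.Icc (0:ℝ) T := ⟨le_trans hs0.1 hs.1, hs.2⟩
        rw [extmem x' s hsmem, hM'eq s hsmem]
        rfl
      calc (Φ x') ⟨s0, hs0⟩
          = (∫ s in s0..T, (x' (Set.projIcc 0 T hT' s)).comp (M' s)) + F s0 :=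
            Φapp x' ⟨s0, hs0⟩
        _ = (∫ s in s0..T, (lam' s).comp (M s)) + F s0 := by rw [hint]
        _ = lam' s0 := (heq' s0 hs0).symm
        _ = x' ⟨s0, hs0⟩ := rfl
    show lam' t = lamC (Set.projIcc 0 T hT' t)
    have h2 : lam' t = x' ⟨t, ht⟩ := rfl
    rw [h2, huniq x' hfx]
    exact (extmem lamC t ht).symm
end
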